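/- arXiv:1903.05301 — 6 statements merged into one kernel-verified Lean document; each statement's English description precedes it below -/
import Mathlib

section
/- Define ρ(p,q) = p⁰q⁰ - p·q - 1. Then for all p, q ∈ ℝ³: (|p-q|² + |p×q|²)/(2p⁰q⁰) ≤ ρ(p,q) ≤ |p-q|²/2. -/
noncomputable section
open Matrix MeasureTheory

abbrev E3 := EuclideanSpace ℝ (Fin 3)

/-- the energy p⁰ = √(1+|p|²) -/
def en (p : E3) : ℝ := Real.sqrt (1 + ‖p‖^2)

/-- the cross product p × q -/
def cross3 (p q : E3) : E3 :=
  (WithLp.equiv 2 (Fin 3 → ℝ)).symm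
    ![p 1 * q 2 - p 2 * q 1, p 2 * q 0 - p 0 * q 2, p 0 * q 1 - p 1 * q 0]

/-- the relative momentum ρ(p,q) = p⁰q⁰ - p·q - 1 -/
def rel (p q : E3) : ℝ := en p * en q - (inner ℝ p q : ℝ) - 1

lemma norm_sq_coords (x : E3) : ‖x‖^2 = x 0^2 + x 1^2 + x 2^2 := by
  rw [EuclideanSpace.norm_eq, Real.sq_sqrt (by positivity), Fin.sum_univ_three]
  simp [Real.norm_eq_abs, sq_abs]

lemma inner_coords (x y : E3) :
    (inner ℝ x y : ℝ) = x 0 * y 0 + x 1 * y 1 + x 2 * y 2 := by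
  simp [PiLp.inner_apply, Fin.sum_univ_three]
  ring

theorem rho_two_sided (p q : E3) :
    (‖p - q‖^2 + ‖cross3 p q‖^2) / (2 * (en p * en q)) ≤ rel p q ∧
      rel p q ≤ ‖p - q‖^2 / 2 := by
  set a := en p with ha
  set b := en q with hb
  set s : ℝ := inner ℝ p q with hs
  have ha2 : a^2 = 1 + ‖p‖^2 := Real.sq_sqrt (by positivity)
  have hb2 : b^2 = 1 + ‖q‖^2 := Real.sq_sqrt (by positivity)
  have ha1 : (1:ℝ) ≤ a := by
    rw [ha, en]
    have h : Real.sqrt 1 ≤ Real.sqrt (1 + ‖p‖^2) :=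
      Real.sqrt_le_sqrt (by nlinarith [sq_nonneg ‖p‖])
    simpa using h
  have hb1 : (1:ℝ) ≤ b := by
    rw [hb, en]
    have h : Real.sqrt 1 ≤ Real.sqrt (1 + ‖q‖^2) :=
      Real.sqrt_le_sqrt (by nlinarith [sq_nonneg ‖q‖])
    simpa using h
  have hsub : ‖p - q‖^2 = ‖p‖^2 + ‖q‖^2 - 2*s := by
    rw [hs, @norm_sub_sq_real]; ring
  have hcross : ‖cross3 p q‖^2 = ‖p‖^2 * ‖q‖^2 - s^2 := by
    rw [norm_sq_coords p, norm_sq_coords q, hs, inner_coords, norm_sq_coords]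
    simp [cross3]
    ring
  have hcs : 1 + s ≤ a * b := by
    have h1 : s ≤ ‖p‖ * ‖q‖ := real_inner_le_norm p q
    have h2 : (1 + ‖p‖ * ‖q‖)^2 ≤ (a*b)^2 := by
      have := sq_nonneg (‖p‖ - ‖q‖)
      nlinarith [norm_nonneg p, norm_nonneg q]
    have hab0 : 0 < a * b := by nlinarith
    have h3 : 1 + ‖p‖ * ‖q‖ ≤ a * b := by
      nlinarith [norm_nonneg p, norm_nonneg q, hab0, h2]
    linarith
  have hab : 0 < a * b := by nlinarith
  constructor
  · rw [div_le_iff₀ (by positivity)]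
    have hρ : rel p q = a * b - s - 1 := rfl
    rw [hρ, hsub, hcross]
    nlinarith [sq_nonneg (a*b - (1+s))]
  · have hρ : rel p q = a * b - s - 1 := rfl
    rw [hρ, hsub]
    nlinarith [sq_nonneg (a - b)]
end
end

section
/- Define ρ = p⁰q⁰ - p·q - 1, τ = ρ + 2, and the 3×3 matrix S(p,q) with entries S^{ij} = ρτ δ_{ij} - (p_i - q_i)(p_j - q_j) + ρ(p_i q_j + p_j q_i). Define Π₁ = |q⁰p - p⁰q|² Id - (q⁰p - p⁰q)⊗(q⁰p - p⁰q) and Π₂ = (p×q)⊗(p×q). Then S = Π₁ - Π₂. -/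
noncomputable section
open Matrix MeasureTheory

/-- the matrix S(p,q) -/
def Smat (p q : E3) : Matrix (Fin 3) (Fin 3) ℝ :=
  Matrix.of fun i j =>
    rel p q * (rel p q + 2) * (if i = j then 1 else 0)
      - (p i - q i) * (p j - q j) + rel p q * (p i * q j + p j * q i)

theorem S_eq_Pi1_sub_Pi2 (p q : E3) :
    Smat p q
      = (‖en q • p - en p • q‖^2 • (1 : Matrix (Fin 3) (Fin 3) ℝ)
          - vecMulVec (en q • p - en p • q) (en q • p - en p • q))
        - vecMulVec (cross3 p q) (cross3 p q) := by
  have hp : (‖p‖:ℝ)^2 = p 0^2 + p 1^2 + p 2^2 := by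
    rw [EuclideanSpace.norm_eq, Real.sq_sqrt (by positivity)]
    simp [Fin.sum_univ_three]
  have hq : (‖q‖:ℝ)^2 = q 0^2 + q 1^2 + q 2^2 := by
    rw [EuclideanSpace.norm_eq, Real.sq_sqrt (by positivity)]
    simp [Fin.sum_univ_three]
  have ha : en p ^ 2 = 1 + (p 0^2 + p 1^2 + p 2^2) := by
    rw [en, Real.sq_sqrt (by positivity), hp]
  have hb : en q ^ 2 = 1 + (q 0^2 + q 1^2 + q 2^2) := by
    rw [en, Real.sq_sqrt (by positivity), hq]
  have hv : ‖en q • p - en p • q‖^2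
      = (en q * p 0 - en p * q 0)^2 + (en q * p 1 - en p * q 1)^2
        + (en q * p 2 - en p * q 2)^2 := by
    rw [EuclideanSpace.norm_eq, Real.sq_sqrt (by positivity)]
    simp [Fin.sum_univ_three, smul_eq_mul]
  have hip : (inner ℝ p q : ℝ) = p 0 * q 0 + p 1 * q 1 + p 2 * q 2 := by
    simp [PiLp.inner_apply, Fin.sum_univ_three]
    ring
  ext i j
  fin_cases i <;> fin_cases j <;>
    simp [Smat, rel, cross3, vecMulVec_apply, Matrix.one_apply, hv, hip,
      Matrix.sub_apply, Matrix.smul_apply, smul_eq_mul, PiLp.toLp_apply]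
  · linear_combination ((-1)*(q 2)^2 + (-1)*(q 1)^2 + (en q)^2) * ha + (1 + (p 0)^2) * hb
  · linear_combination ((q 0)*(q 1)) * ha + ((p 0)*(p 1)) * hb
  · linear_combination ((q 0)*(q 2)) * ha + ((p 0)*(p 2)) * hb
  · linear_combination ((q 0)*(q 1)) * ha + ((p 0)*(p 1)) * hb
  · linear_combination ((-1)*(q 2)^2 + (-1)*(q 0)^2 + (en q)^2) * ha + (1 + (p 1)^2) * hb
  · linear_combination ((q 1)*(q 2)) * ha + ((p 1)*(p 2)) * hb
  · linear_combination ((q 0)*(q 2)) * ha + ((p 0)*(p 2)) * hb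
  · linear_combination ((q 1)*(q 2)) * ha + ((p 1)*(p 2)) * hb
  · linear_combination ((-1)*(q 1)^2 + (-1)*(q 0)^2 + (en q)^2) * ha + (1 + (p 2)^2) * hb
end
end

section
/- Define σ_S(p,q) = σ_{Π₁}(p,q) - (1/(p⁰+1)) (p×q)⊗(p₃,p₂,p₁)ᵀ, where σ_{Π₁} is the matrix with rows [q⁰p₂-p⁰q₂, -(q⁰p₃-p⁰q₃), 0], [-(q⁰p₁-p⁰q₁), 0, q⁰p₃-p⁰q₃], [0, q⁰p₁-p⁰q₁, -(q⁰p₂-p⁰q₂)]. Then σ_S σ_Sᵀ = S, where S is the matrix with entries S^{ij} = ρτ δ_{ij} - (p_i-q_i)(p_j-q_j) + ρ(p_i q_j + p_j q_i), ρ = p⁰q⁰ - p·q - 1, τ = ρ + 2. -/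
set_option maxHeartbeats 2000000


noncomputable section
open Matrix MeasureTheory

/-- the matrix σ_{Π₁}(p,q) -/
def sigmaPi1 (p q : E3) : Matrix (Fin 3) (Fin 3) ℝ :=
  !![en q * p 1 - en p * q 1, -(en q * p 2 - en p * q 2), 0;
     -(en q * p 0 - en p * q 0), 0, en q * p 2 - en p * q 2;
     0, en q * p 0 - en p * q 0, -(en q * p 1 - en p * q 1)]

/-- the matrix σ_S(p,q) -/
def sigmaS (p q : E3) : Matrix (Fin 3) (Fin 3) ℝ :=
  sigmaPi1 p q - (1 / (en p + 1)) • vecMulVec (cross3 p q) ![p 2, p 1, p 0]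

lemma sigmaS_apply' (p q : E3) (i j : Fin 3) :
    sigmaS p q i j = sigmaPi1 p q i j
      - (1 / (en p + 1)) * (![p 1 * q 2 - p 2 * q 1, p 2 * q 0 - p 0 * q 2, p 0 * q 1 - p 1 * q 0] i
          * ![p 2, p 1, p 0] j) := by
  simp [sigmaS, cross3, vecMulVec_apply, Matrix.sub_apply, Matrix.smul_apply, mul_assoc]
  left
  fin_cases j <;> simp

theorem sigmaS_sq (p q : E3) : sigmaS p q * (sigmaS p q)ᵀ = Smat p q := by
  have h1 : en p ^ 2 = 1 + p 0 ^ 2 + p 1 ^ 2 + p 2 ^ 2 := by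
    rw [en, Real.sq_sqrt (by positivity), EuclideanSpace.norm_eq,
      Real.sq_sqrt (by positivity)]
    simp [Fin.sum_univ_three]; ring
  have h2 : en q ^ 2 = 1 + q 0 ^ 2 + q 1 ^ 2 + q 2 ^ 2 := by
    rw [en, Real.sq_sqrt (by positivity), EuclideanSpace.norm_eq,
      Real.sq_sqrt (by positivity)]
    simp [Fin.sum_univ_three]; ring
  have hp0 : (0:ℝ) < en p := Real.sqrt_pos.2 (by positivity)
  have hne : en p + 1 ≠ 0 := by linarith
  have ht : (en p + 1)⁻¹ * (en p + 1) = 1 := inv_mul_cancel₀ hne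
  have hip : (inner ℝ p q : ℝ) = p 0 * q 0 + p 1 * q 1 + p 2 * q 2 := by
    simp [PiLp.inner_apply, Fin.sum_univ_three, RCLike.inner_apply]; ring
  ext i j
  rw [mul_apply, Fin.sum_univ_three]
  simp only [transpose_apply, sigmaS_apply', sigmaPi1, Smat, rel, hip, Matrix.of_apply]
  fin_cases i <;> fin_cases j <;> simp
  · refine mul_left_cancel₀ (pow_ne_zero 2 hne) ?_
    linear_combination (1 + 2*(q 2)^2 + 2*(q 1)^2 + (q 0)^2 - (p 2)^2*(q 1)^2 + 2*(p 1)*(p 2)*(q 1)*(q 2) - (p 1)^2*(q 2)^2 + (p 0)^2 + (p 0)^2*(q 2)^2 + (p 0)^2*(q 1)^2 + (p 0)^2*(q 0)^2 - 2*(en q)^2 - (en q)^2*(p 0)^2 + 2*(en p)*(q 2)^2 + 2*(en p)*(q 1)^2 - 2*(en p)*(en q)^2 + (en p)^2*(q 2)^2 + (en p)^2*(q 1)^2 - (en p)^2*(en q)^2) * h1 + (-2 - (p 2)^2 - (p 1)^2 - 3*(p 0)^2 - (p 0)^2*(p 2)^2 - (p 0)^2*(p 1)^2 - (p 0)^4 -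 2*(en p) - 2*(en p)*(p 0)^2) * h2 + ((p 2)^4*(q 1)^2 - 2*(p 1)*(p 2)^3*(q 1)*(q 2) + (p 1)^2*(p 2)^2*(q 2)^2 + (p 1)^2*(p 2)^2*(q 1)^2 - 2*(p 1)^3*(p 2)*(q 1)*(q 2) + (p 1)^4*(q 2)^2 + (p 0)^2*(p 2)^2*(q 1)^2 - 2*(p 0)^2*(p 1)*(p 2)*(q 1)*(q 2) + (p 0)^2*(p 1)^2*(q 2)^2 + ((en p + 1)⁻¹)*(p 2)^4*(q 1)^2 - 2*((en p + 1)⁻¹)*(p 1)*(p 2)^3*(q 1)*(q 2) + ((en p + 1)⁻¹)*(p 1)^2*(p 2)^2*(q 2)^2 + ((en p + 1)⁻¹)*(p 1)^2*(p 2)^2*(q 1)^2 - 2*((en p + 1)⁻¹)*(p 1)^3*(p 2)*(q 1)*(q 2) + ((en p + 1)⁻¹)*(p 1)^4*(q 2)^2 + ((en p + 1)⁻¹)*(p 0)^2*(p 2)^2*(q 1)^2 - 2*((en p + 1)⁻¹)*(p 0)^2*(p 1)*(p 2)*(q 1)*(q 2) + ((en p + 1)⁻¹)*(p 0)^2*(p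 1)^2*(q 2)^2 - 2*(en p)*(p 2)^2*(q 1)^2 + 4*(en p)*(p 1)*(p 2)*(q 1)*(q 2) - 2*(en p)*(p 1)^2*(q 2)^2 + (en p)*((en p + 1)⁻¹)*(p 2)^4*(q 1)^2 - 2*(en p)*((en p + 1)⁻¹)*(p 1)*(p 2)^3*(q 1)*(q 2) + (en p)*((en p + 1)⁻¹)*(p 1)^2*(p 2)^2*(q 2)^2 + (en p)*((en p + 1)⁻¹)*(p 1)^2*(p 2)^2*(q 1)^2 - 2*(en p)*((en p + 1)⁻¹)*(p 1)^3*(p 2)*(q 1)*(q 2) + (en p)*((en p + 1)⁻¹)*(p 1)^4*(q 2)^2 + (en p)*((en p + 1)⁻¹)*(p 0)^2*(p 2)^2*(q 1)^2 - 2*(en p)*((en p + 1)⁻¹)*(p 0)^2*(p 1)*(p 2)*(q 1)*(q 2) + (en p)*((en p + 1)⁻¹)*(p 0)^2*(p 1)^2*(q 2)^2 - 2*(en p)^2*(p 2)^2*(q 1)^2 + 4*(en p)^2*(p 1)*(p 2)*(q 1)*(q 2) - 2*(en p)^2*(p 1)^2*(q 2)^2) * ht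
  · refine mul_left_cancel₀ (pow_ne_zero 2 hne) ?_
    linear_combination (-(q 0)*(q 1) + (p 2)^2*(q 0)*(q 1) - (p 1)*(p 2)*(q 0)*(q 2) - (p 0)*(p 2)*(q 1)*(q 2) + (p 0)*(p 1) + 2*(p 0)*(p 1)*(q 2)^2 + (p 0)*(p 1)*(q 1)^2 + (p 0)*(p 1)*(q 0)^2 - (en q)^2*(p 0)*(p 1) - 2*(en p)*(q 0)*(q 1) - (en p)^2*(q 0)*(q 1)) * h1 + (-2*(p 0)*(p 1) - (p 0)*(p 1)*(p 2)^2 - (p 0)*(p 1)^3 - (p 0)^3*(p 1) - 2*(en p)*(p 0)*(p 1)) * h2 + (-(p 2)^4*(q 0)*(q 1) + (p 1)*(p 2)^3*(q 0)*(q 2) - (p 1)^2*(p 2)^2*(q 0)*(q 1) + (p 1)^3*(p 2)*(q 0)*(q 2) + (p 0)*(p 2)^3*(q 1)*(q 2) - (p 0)*(p 1)*(p 2)^2*(q 2)^2 + (p 0)*(p 1)^2*(p 2)*(q 1)*(q 2) - (p 0)*(p 1)^3*(q 2)^2 - (p 0)^2*(p 2)^2*(q 0)*(q 1) + (p 0)^2*(p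 1)*(p 2)*(q 0)*(q 2) + (p 0)^3*(p 2)*(q 1)*(q 2) - (p 0)^3*(p 1)*(q 2)^2 - ((en p + 1)⁻¹)*(p 2)^4*(q 0)*(q 1) + ((en p + 1)⁻¹)*(p 1)*(p 2)^3*(q 0)*(q 2) - ((en p + 1)⁻¹)*(p 1)^2*(p 2)^2*(q 0)*(q 1) + ((en p + 1)⁻¹)*(p 1)^3*(p 2)*(q 0)*(q 2) + ((en p + 1)⁻¹)*(p 0)*(p 2)^3*(q 1)*(q 2) - ((en p + 1)⁻¹)*(p 0)*(p 1)*(p 2)^2*(q 2)^2 + ((en p + 1)⁻¹)*(p 0)*(p 1)^2*(p 2)*(q 1)*(q 2) - ((en p + 1)⁻¹)*(p 0)*(p 1)^3*(q 2)^2 - ((en p + 1)⁻¹)*(p 0)^2*(p 2)^2*(q 0)*(q 1) + ((en p + 1)⁻¹)*(p 0)^2*(p 1)*(p 2)*(q 0)*(q 2) + ((en p + 1)⁻¹)*(p 0)^3*(p 2)*(q 1)*(q 2) - ((en p + 1)⁻¹)*(p 0)^3*(p 1)*(q 2)^2 + 2*(en p)*(p 2)^2*(q 0)*(q 1) - 2*(en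 p)*(p 1)*(p 2)*(q 0)*(q 2) - 2*(en p)*(p 0)*(p 2)*(q 1)*(q 2) + 2*(en p)*(p 0)*(p 1)*(q 2)^2 - (en p)*((en p + 1)⁻¹)*(p 2)^4*(q 0)*(q 1) + (en p)*((en p + 1)⁻¹)*(p 1)*(p 2)^3*(q 0)*(q 2) - (en p)*((en p + 1)⁻¹)*(p 1)^2*(p 2)^2*(q 0)*(q 1) + (en p)*((en p + 1)⁻¹)*(p 1)^3*(p 2)*(q 0)*(q 2) + (en p)*((en p + 1)⁻¹)*(p 0)*(p 2)^3*(q 1)*(q 2) - (en p)*((en p + 1)⁻¹)*(p 0)*(p 1)*(p 2)^2*(q 2)^2 + (en p)*((en p + 1)⁻¹)*(p 0)*(p 1)^2*(p 2)*(q 1)*(q 2) - (en p)*((en p + 1)⁻¹)*(p 0)*(p 1)^3*(q 2)^2 - (en p)*((en p + 1)⁻¹)*(p 0)^2*(p 2)^2*(q 0)*(q 1) + (en p)*((en p + 1)⁻¹)*(p 0)^2*(p 1)*(p 2)*(q 0)*(q 2) + (en p)*((en p + 1)⁻¹)*(p 0)^3*(p 2)*(q 1)*(q 2) - (en p)*((en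 p + 1)⁻¹)*(p 0)^3*(p 1)*(q 2)^2 + 2*(en p)^2*(p 2)^2*(q 0)*(q 1) - 2*(en p)^2*(p 1)*(p 2)*(q 0)*(q 2) - 2*(en p)^2*(p 0)*(p 2)*(q 1)*(q 2) + 2*(en p)^2*(p 0)*(p 1)*(q 2)^2) * ht
  · refine mul_left_cancel₀ (pow_ne_zero 2 hne) ?_
    linear_combination (-(q 0)*(q 2) - (p 1)*(p 2)*(q 0)*(q 1) + (p 1)^2*(q 0)*(q 2) + (p 0)*(p 2) + (p 0)*(p 2)*(q 2)^2 + 2*(p 0)*(p 2)*(q 1)^2 + (p 0)*(p 2)*(q 0)^2 - (p 0)*(p 1)*(q 1)*(q 2) - (en q)^2*(p 0)*(p 2) - 2*(en p)*(q 0)*(q 2) - (en p)^2*(q 0)*(q 2)) * h1 + (-2*(p 0)*(p 2) - (p 0)*(p 2)^3 - (p 0)*(p 1)^2*(p 2) - (p 0)^3*(p 2) - 2*(en p)*(p 0)*(p 2)) * h2 + ((p 1)*(p 2)^3*(q 0)*(q 1) - (p 1)^2*(p 2)^2*(q 0)*(q 2) + (p 1)^3*(p 2)*(q 0)*(q 1)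 - (p 1)^4*(q 0)*(q 2) - (p 0)*(p 2)^3*(q 1)^2 + (p 0)*(p 1)*(p 2)^2*(q 1)*(q 2) - (p 0)*(p 1)^2*(p 2)*(q 1)^2 + (p 0)*(p 1)^3*(q 1)*(q 2) + (p 0)^2*(p 1)*(p 2)*(q 0)*(q 1) - (p 0)^2*(p 1)^2*(q 0)*(q 2) - (p 0)^3*(p 2)*(q 1)^2 + (p 0)^3*(p 1)*(q 1)*(q 2) + ((en p + 1)⁻¹)*(p 1)*(p 2)^3*(q 0)*(q 1) - ((en p + 1)⁻¹)*(p 1)^2*(p 2)^2*(q 0)*(q 2) + ((en p + 1)⁻¹)*(p 1)^3*(p 2)*(q 0)*(q 1) - ((en p + 1)⁻¹)*(p 1)^4*(q 0)*(q 2) - ((en p + 1)⁻¹)*(p 0)*(p 2)^3*(q 1)^2 + ((en p + 1)⁻¹)*(p 0)*(p 1)*(p 2)^2*(q 1)*(q 2) - ((en p + 1)⁻¹)*(p 0)*(p 1)^2*(p 2)*(q 1)^2 + ((en p + 1)⁻¹)*(p 0)*(p 1)^3*(q 1)*(q 2) + ((en p + 1)⁻¹)*(p 0)^2*(p 1)*(p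 2)*(q 0)*(q 1) - ((en p + 1)⁻¹)*(p 0)^2*(p 1)^2*(q 0)*(q 2) - ((en p + 1)⁻¹)*(p 0)^3*(p 2)*(q 1)^2 + ((en p + 1)⁻¹)*(p 0)^3*(p 1)*(q 1)*(q 2) - 2*(en p)*(p 1)*(p 2)*(q 0)*(q 1) + 2*(en p)*(p 1)^2*(q 0)*(q 2) + 2*(en p)*(p 0)*(p 2)*(q 1)^2 - 2*(en p)*(p 0)*(p 1)*(q 1)*(q 2) + (en p)*((en p + 1)⁻¹)*(p 1)*(p 2)^3*(q 0)*(q 1) - (en p)*((en p + 1)⁻¹)*(p 1)^2*(p 2)^2*(q 0)*(q 2) + (en p)*((en p + 1)⁻¹)*(p 1)^3*(p 2)*(q 0)*(q 1) - (en p)*((en p + 1)⁻¹)*(p 1)^4*(q 0)*(q 2) - (en p)*((en p + 1)⁻¹)*(p 0)*(p 2)^3*(q 1)^2 + (en p)*((en p + 1)⁻¹)*(p 0)*(p 1)*(p 2)^2*(q 1)*(q 2) - (en p)*((en p + 1)⁻¹)*(p 0)*(p 1)^2*(p 2)*(q 1)^2 + (en p)*((en p + 1)⁻¹)*(p 0)*(p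 1)^3*(q 1)*(q 2) + (en p)*((en p + 1)⁻¹)*(p 0)^2*(p 1)*(p 2)*(q 0)*(q 1) - (en p)*((en p + 1)⁻¹)*(p 0)^2*(p 1)^2*(q 0)*(q 2) - (en p)*((en p + 1)⁻¹)*(p 0)^3*(p 2)*(q 1)^2 + (en p)*((en p + 1)⁻¹)*(p 0)^3*(p 1)*(q 1)*(q 2) - 2*(en p)^2*(p 1)*(p 2)*(q 0)*(q 1) + 2*(en p)^2*(p 1)^2*(q 0)*(q 2) + 2*(en p)^2*(p 0)*(p 2)*(q 1)^2 - 2*(en p)^2*(p 0)*(p 1)*(q 1)*(q 2)) * ht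
  · refine mul_left_cancel₀ (pow_ne_zero 2 hne) ?_
    linear_combination (-(q 0)*(q 1) + (p 2)^2*(q 0)*(q 1) - (p 1)*(p 2)*(q 0)*(q 2) - (p 0)*(p 2)*(q 1)*(q 2) + (p 0)*(p 1) + 2*(p 0)*(p 1)*(q 2)^2 + (p 0)*(p 1)*(q 1)^2 + (p 0)*(p 1)*(q 0)^2 - (en q)^2*(p 0)*(p 1) - 2*(en p)*(q 0)*(q 1) - (en p)^2*(q 0)*(q 1)) * h1 + (-2*(p 0)*(p 1) - (p 0)*(p 1)*(p 2)^2 - (p 0)*(p 1)^3 - (p 0)^3*(p 1) - 2*(en p)*(p 0)*(p 1)) * h2 + (-(p 2)^4*(q 0)*(q 1) + (p 1)*(p 2)^3*(q 0)*(q 2) - (p 1)^2*(p 2)^2*(q 0)*(q 1) + (p 1)^3*(p 2)*(q 0)*(q 2) + (p 0)*(p 2)^3*(q 1)*(q 2) - (p 0)*(p 1)*(p 2)^2*(q 2)^2 + (p 0)*(p 1)^2*(p 2)*(q 1)*(q 2) - (p 0)*(p 1)^3*(q 2)^2 - (p 0)^2*(p 2)^2*(q 0)*(q 1) + (p 0)^2*(p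 1)*(p 2)*(q 0)*(q 2) + (p 0)^3*(p 2)*(q 1)*(q 2) - (p 0)^3*(p 1)*(q 2)^2 - ((en p + 1)⁻¹)*(p 2)^4*(q 0)*(q 1) + ((en p + 1)⁻¹)*(p 1)*(p 2)^3*(q 0)*(q 2) - ((en p + 1)⁻¹)*(p 1)^2*(p 2)^2*(q 0)*(q 1) + ((en p + 1)⁻¹)*(p 1)^3*(p 2)*(q 0)*(q 2) + ((en p + 1)⁻¹)*(p 0)*(p 2)^3*(q 1)*(q 2) - ((en p + 1)⁻¹)*(p 0)*(p 1)*(p 2)^2*(q 2)^2 + ((en p + 1)⁻¹)*(p 0)*(p 1)^2*(p 2)*(q 1)*(q 2) - ((en p + 1)⁻¹)*(p 0)*(p 1)^3*(q 2)^2 - ((en p + 1)⁻¹)*(p 0)^2*(p 2)^2*(q 0)*(q 1) + ((en p + 1)⁻¹)*(p 0)^2*(p 1)*(p 2)*(q 0)*(q 2) + ((en p + 1)⁻¹)*(p 0)^3*(p 2)*(q 1)*(q 2) - ((en p + 1)⁻¹)*(p 0)^3*(p 1)*(q 2)^2 + 2*(en p)*(p 2)^2*(q 0)*(q 1) - 2*(en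 p)*(p 1)*(p 2)*(q 0)*(q 2) - 2*(en p)*(p 0)*(p 2)*(q 1)*(q 2) + 2*(en p)*(p 0)*(p 1)*(q 2)^2 - (en p)*((en p + 1)⁻¹)*(p 2)^4*(q 0)*(q 1) + (en p)*((en p + 1)⁻¹)*(p 1)*(p 2)^3*(q 0)*(q 2) - (en p)*((en p + 1)⁻¹)*(p 1)^2*(p 2)^2*(q 0)*(q 1) + (en p)*((en p + 1)⁻¹)*(p 1)^3*(p 2)*(q 0)*(q 2) + (en p)*((en p + 1)⁻¹)*(p 0)*(p 2)^3*(q 1)*(q 2) - (en p)*((en p + 1)⁻¹)*(p 0)*(p 1)*(p 2)^2*(q 2)^2 + (en p)*((en p + 1)⁻¹)*(p 0)*(p 1)^2*(p 2)*(q 1)*(q 2) - (en p)*((en p + 1)⁻¹)*(p 0)*(p 1)^3*(q 2)^2 - (en p)*((en p + 1)⁻¹)*(p 0)^2*(p 2)^2*(q 0)*(q 1) + (en p)*((en p + 1)⁻¹)*(p 0)^2*(p 1)*(p 2)*(q 0)*(q 2) + (en p)*((en p + 1)⁻¹)*(p 0)^3*(p 2)*(q 1)*(q 2) - (en p)*((en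 p + 1)⁻¹)*(p 0)^3*(p 1)*(q 2)^2 + 2*(en p)^2*(p 2)^2*(q 0)*(q 1) - 2*(en p)^2*(p 1)*(p 2)*(q 0)*(q 2) - 2*(en p)^2*(p 0)*(p 2)*(q 1)*(q 2) + 2*(en p)^2*(p 0)*(p 1)*(q 2)^2) * ht
  · refine mul_left_cancel₀ (pow_ne_zero 2 hne) ?_
    linear_combination (1 + 2*(q 2)^2 + (q 1)^2 + 2*(q 0)^2 - (p 2)^2*(q 0)^2 + (p 1)^2 + (p 1)^2*(q 2)^2 + (p 1)^2*(q 1)^2 + (p 1)^2*(q 0)^2 + 2*(p 0)*(p 2)*(q 0)*(q 2) - (p 0)^2*(q 2)^2 - 2*(en q)^2 - (en q)^2*(p 1)^2 + 2*(en p)*(q 2)^2 + 2*(en p)*(q 0)^2 - 2*(en p)*(en q)^2 + (en p)^2*(q 2)^2 + (en p)^2*(q 0)^2 - (en p)^2*(en q)^2) * h1 + (-2 - (p 2)^2 - 3*(p 1)^2 - (p 1)^2*(p 2)^2 - (p 1)^4 - (p 0)^2 - (p 0)^2*(p 1)^2 - 2*(en p) - 2*(en p)*(p 1)^2) * h2 +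 ((p 2)^4*(q 0)^2 + (p 1)^2*(p 2)^2*(q 0)^2 - 2*(p 0)*(p 2)^3*(q 0)*(q 2) - 2*(p 0)*(p 1)^2*(p 2)*(q 0)*(q 2) + (p 0)^2*(p 2)^2*(q 2)^2 + (p 0)^2*(p 2)^2*(q 0)^2 + (p 0)^2*(p 1)^2*(q 2)^2 - 2*(p 0)^3*(p 2)*(q 0)*(q 2) + (p 0)^4*(q 2)^2 + ((en p + 1)⁻¹)*(p 2)^4*(q 0)^2 + ((en p + 1)⁻¹)*(p 1)^2*(p 2)^2*(q 0)^2 - 2*((en p + 1)⁻¹)*(p 0)*(p 2)^3*(q 0)*(q 2) - 2*((en p + 1)⁻¹)*(p 0)*(p 1)^2*(p 2)*(q 0)*(q 2) + ((en p + 1)⁻¹)*(p 0)^2*(p 2)^2*(q 2)^2 + ((en p + 1)⁻¹)*(p 0)^2*(p 2)^2*(q 0)^2 + ((en p + 1)⁻¹)*(p 0)^2*(p 1)^2*(q 2)^2 - 2*((en p + 1)⁻¹)*(p 0)^3*(p 2)*(q 0)*(q 2) + ((en p + 1)⁻¹)*(p 0)^4*(q 2)^2 - 2*(en p)*(p 2)^2*(q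 0)^2 + 4*(en p)*(p 0)*(p 2)*(q 0)*(q 2) - 2*(en p)*(p 0)^2*(q 2)^2 + (en p)*((en p + 1)⁻¹)*(p 2)^4*(q 0)^2 + (en p)*((en p + 1)⁻¹)*(p 1)^2*(p 2)^2*(q 0)^2 - 2*(en p)*((en p + 1)⁻¹)*(p 0)*(p 2)^3*(q 0)*(q 2) - 2*(en p)*((en p + 1)⁻¹)*(p 0)*(p 1)^2*(p 2)*(q 0)*(q 2) + (en p)*((en p + 1)⁻¹)*(p 0)^2*(p 2)^2*(q 2)^2 + (en p)*((en p + 1)⁻¹)*(p 0)^2*(p 2)^2*(q 0)^2 + (en p)*((en p + 1)⁻¹)*(p 0)^2*(p 1)^2*(q 2)^2 - 2*(en p)*((en p + 1)⁻¹)*(p 0)^3*(p 2)*(q 0)*(q 2) + (en p)*((en p + 1)⁻¹)*(p 0)^4*(q 2)^2 - 2*(en p)^2*(p 2)^2*(q 0)^2 + 4*(en p)^2*(p 0)*(p 2)*(q 0)*(q 2) - 2*(en p)^2*(p 0)^2*(q 2)^2) * ht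
  · refine mul_left_cancel₀ (pow_ne_zero 2 hne) ?_
    linear_combination (-(q 1)*(q 2) + (p 1)*(p 2) + (p 1)*(p 2)*(q 2)^2 + (p 1)*(p 2)*(q 1)^2 + 2*(p 1)*(p 2)*(q 0)^2 - (p 0)*(p 2)*(q 0)*(q 1) - (p 0)*(p 1)*(q 0)*(q 2) + (p 0)^2*(q 1)*(q 2) - (en q)^2*(p 1)*(p 2) - 2*(en p)*(q 1)*(q 2) - (en p)^2*(q 1)*(q 2)) * h1 + (-2*(p 1)*(p 2) - (p 1)*(p 2)^3 - (p 1)^3*(p 2) - (p 0)^2*(p 1)*(p 2) - 2*(en p)*(p 1)*(p 2)) * h2 + (-(p 1)*(p 2)^3*(q 0)^2 - (p 1)^3*(p 2)*(q 0)^2 + (p 0)*(p 2)^3*(q 0)*(q 1) + (p 0)*(p 1)*(p 2)^2*(q 0)*(q 2) + (p 0)*(p 1)^2*(p 2)*(q 0)*(q 1) + (p 0)*(p 1)^3*(q 0)*(q 2) - (p 0)^2*(p 2)^2*(q 1)*(q 2) - (p 0)^2*(p 1)*(p 2)*(q 0)^2 - (p 0)^2*(p 1)^2*(q 1)*(q 2)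 + (p 0)^3*(p 2)*(q 0)*(q 1) + (p 0)^3*(p 1)*(q 0)*(q 2) - (p 0)^4*(q 1)*(q 2) - ((en p + 1)⁻¹)*(p 1)*(p 2)^3*(q 0)^2 - ((en p + 1)⁻¹)*(p 1)^3*(p 2)*(q 0)^2 + ((en p + 1)⁻¹)*(p 0)*(p 2)^3*(q 0)*(q 1) + ((en p + 1)⁻¹)*(p 0)*(p 1)*(p 2)^2*(q 0)*(q 2) + ((en p + 1)⁻¹)*(p 0)*(p 1)^2*(p 2)*(q 0)*(q 1) + ((en p + 1)⁻¹)*(p 0)*(p 1)^3*(q 0)*(q 2) - ((en p + 1)⁻¹)*(p 0)^2*(p 2)^2*(q 1)*(q 2) - ((en p + 1)⁻¹)*(p 0)^2*(p 1)*(p 2)*(q 0)^2 - ((en p + 1)⁻¹)*(p 0)^2*(p 1)^2*(q 1)*(q 2) + ((en p + 1)⁻¹)*(p 0)^3*(p 2)*(q 0)*(q 1) + ((en p + 1)⁻¹)*(p 0)^3*(p 1)*(q 0)*(q 2) - ((en p + 1)⁻¹)*(p 0)^4*(q 1)*(q 2) + 2*(en p)*(p 1)*(p 2)*(q 0)^2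 - 2*(en p)*(p 0)*(p 2)*(q 0)*(q 1) - 2*(en p)*(p 0)*(p 1)*(q 0)*(q 2) + 2*(en p)*(p 0)^2*(q 1)*(q 2) - (en p)*((en p + 1)⁻¹)*(p 1)*(p 2)^3*(q 0)^2 - (en p)*((en p + 1)⁻¹)*(p 1)^3*(p 2)*(q 0)^2 + (en p)*((en p + 1)⁻¹)*(p 0)*(p 2)^3*(q 0)*(q 1) + (en p)*((en p + 1)⁻¹)*(p 0)*(p 1)*(p 2)^2*(q 0)*(q 2) + (en p)*((en p + 1)⁻¹)*(p 0)*(p 1)^2*(p 2)*(q 0)*(q 1) + (en p)*((en p + 1)⁻¹)*(p 0)*(p 1)^3*(q 0)*(q 2) - (en p)*((en p + 1)⁻¹)*(p 0)^2*(p 2)^2*(q 1)*(q 2) - (en p)*((en p + 1)⁻¹)*(p 0)^2*(p 1)*(p 2)*(q 0)^2 - (en p)*((en p + 1)⁻¹)*(p 0)^2*(p 1)^2*(q 1)*(q 2) + (en p)*((en p + 1)⁻¹)*(p 0)^3*(p 2)*(q 0)*(q 1) + (en p)*((en p + 1)⁻¹)*(p 0)^3*(p 1)*(q 0)*(q 2)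 - (en p)*((en p + 1)⁻¹)*(p 0)^4*(q 1)*(q 2) + 2*(en p)^2*(p 1)*(p 2)*(q 0)^2 - 2*(en p)^2*(p 0)*(p 2)*(q 0)*(q 1) - 2*(en p)^2*(p 0)*(p 1)*(q 0)*(q 2) + 2*(en p)^2*(p 0)^2*(q 1)*(q 2)) * ht
  · refine mul_left_cancel₀ (pow_ne_zero 2 hne) ?_
    linear_combination (-(q 0)*(q 2) - (p 1)*(p 2)*(q 0)*(q 1) + (p 1)^2*(q 0)*(q 2) + (p 0)*(p 2) + (p 0)*(p 2)*(q 2)^2 + 2*(p 0)*(p 2)*(q 1)^2 + (p 0)*(p 2)*(q 0)^2 - (p 0)*(p 1)*(q 1)*(q 2) - (en q)^2*(p 0)*(p 2) - 2*(en p)*(q 0)*(q 2) - (en p)^2*(q 0)*(q 2)) * h1 + (-2*(p 0)*(p 2) - (p 0)*(p 2)^3 - (p 0)*(p 1)^2*(p 2) - (p 0)^3*(p 2) - 2*(en p)*(p 0)*(p 2)) * h2 + ((p 1)*(p 2)^3*(q 0)*(q 1) - (p 1)^2*(p 2)^2*(q 0)*(q 2) + (p 1)^3*(p 2)*(q 0)*(q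 1) - (p 1)^4*(q 0)*(q 2) - (p 0)*(p 2)^3*(q 1)^2 + (p 0)*(p 1)*(p 2)^2*(q 1)*(q 2) - (p 0)*(p 1)^2*(p 2)*(q 1)^2 + (p 0)*(p 1)^3*(q 1)*(q 2) + (p 0)^2*(p 1)*(p 2)*(q 0)*(q 1) - (p 0)^2*(p 1)^2*(q 0)*(q 2) - (p 0)^3*(p 2)*(q 1)^2 + (p 0)^3*(p 1)*(q 1)*(q 2) + ((en p + 1)⁻¹)*(p 1)*(p 2)^3*(q 0)*(q 1) - ((en p + 1)⁻¹)*(p 1)^2*(p 2)^2*(q 0)*(q 2) + ((en p + 1)⁻¹)*(p 1)^3*(p 2)*(q 0)*(q 1) - ((en p + 1)⁻¹)*(p 1)^4*(q 0)*(q 2) - ((en p + 1)⁻¹)*(p 0)*(p 2)^3*(q 1)^2 + ((en p + 1)⁻¹)*(p 0)*(p 1)*(p 2)^2*(q 1)*(q 2) - ((en p + 1)⁻¹)*(p 0)*(p 1)^2*(p 2)*(q 1)^2 + ((en p + 1)⁻¹)*(p 0)*(p 1)^3*(q 1)*(q 2) + ((en p + 1)⁻¹)*(p 0)^2*(p 1)*(p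 2)*(q 0)*(q 1) - ((en p + 1)⁻¹)*(p 0)^2*(p 1)^2*(q 0)*(q 2) - ((en p + 1)⁻¹)*(p 0)^3*(p 2)*(q 1)^2 + ((en p + 1)⁻¹)*(p 0)^3*(p 1)*(q 1)*(q 2) - 2*(en p)*(p 1)*(p 2)*(q 0)*(q 1) + 2*(en p)*(p 1)^2*(q 0)*(q 2) + 2*(en p)*(p 0)*(p 2)*(q 1)^2 - 2*(en p)*(p 0)*(p 1)*(q 1)*(q 2) + (en p)*((en p + 1)⁻¹)*(p 1)*(p 2)^3*(q 0)*(q 1) - (en p)*((en p + 1)⁻¹)*(p 1)^2*(p 2)^2*(q 0)*(q 2) + (en p)*((en p + 1)⁻¹)*(p 1)^3*(p 2)*(q 0)*(q 1) - (en p)*((en p + 1)⁻¹)*(p 1)^4*(q 0)*(q 2) - (en p)*((en p + 1)⁻¹)*(p 0)*(p 2)^3*(q 1)^2 + (en p)*((en p + 1)⁻¹)*(p 0)*(p 1)*(p 2)^2*(q 1)*(q 2) - (en p)*((en p + 1)⁻¹)*(p 0)*(p 1)^2*(p 2)*(q 1)^2 + (en p)*((en p + 1)⁻¹)*(p 0)*(p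 1)^3*(q 1)*(q 2) + (en p)*((en p + 1)⁻¹)*(p 0)^2*(p 1)*(p 2)*(q 0)*(q 1) - (en p)*((en p + 1)⁻¹)*(p 0)^2*(p 1)^2*(q 0)*(q 2) - (en p)*((en p + 1)⁻¹)*(p 0)^3*(p 2)*(q 1)^2 + (en p)*((en p + 1)⁻¹)*(p 0)^3*(p 1)*(q 1)*(q 2) - 2*(en p)^2*(p 1)*(p 2)*(q 0)*(q 1) + 2*(en p)^2*(p 1)^2*(q 0)*(q 2) + 2*(en p)^2*(p 0)*(p 2)*(q 1)^2 - 2*(en p)^2*(p 0)*(p 1)*(q 1)*(q 2)) * ht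
  · refine mul_left_cancel₀ (pow_ne_zero 2 hne) ?_
    linear_combination (-(q 1)*(q 2) + (p 1)*(p 2) + (p 1)*(p 2)*(q 2)^2 + (p 1)*(p 2)*(q 1)^2 + 2*(p 1)*(p 2)*(q 0)^2 - (p 0)*(p 2)*(q 0)*(q 1) - (p 0)*(p 1)*(q 0)*(q 2) + (p 0)^2*(q 1)*(q 2) - (en q)^2*(p 1)*(p 2) - 2*(en p)*(q 1)*(q 2) - (en p)^2*(q 1)*(q 2)) * h1 + (-2*(p 1)*(p 2) - (p 1)*(p 2)^3 - (p 1)^3*(p 2) - (p 0)^2*(p 1)*(p 2) - 2*(en p)*(p 1)*(p 2)) * h2 + (-(p 1)*(p 2)^3*(q 0)^2 - (p 1)^3*(p 2)*(q 0)^2 + (p 0)*(p 2)^3*(q 0)*(q 1) + (p 0)*(p 1)*(p 2)^2*(q 0)*(q 2) + (p 0)*(p 1)^2*(p 2)*(q 0)*(q 1) + (p 0)*(p 1)^3*(q 0)*(q 2) - (p 0)^2*(p 2)^2*(q 1)*(q 2) - (p 0)^2*(p 1)*(p 2)*(q 0)^2 - (p 0)^2*(p 1)^2*(q 1)*(q 2)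 + (p 0)^3*(p 2)*(q 0)*(q 1) + (p 0)^3*(p 1)*(q 0)*(q 2) - (p 0)^4*(q 1)*(q 2) - ((en p + 1)⁻¹)*(p 1)*(p 2)^3*(q 0)^2 - ((en p + 1)⁻¹)*(p 1)^3*(p 2)*(q 0)^2 + ((en p + 1)⁻¹)*(p 0)*(p 2)^3*(q 0)*(q 1) + ((en p + 1)⁻¹)*(p 0)*(p 1)*(p 2)^2*(q 0)*(q 2) + ((en p + 1)⁻¹)*(p 0)*(p 1)^2*(p 2)*(q 0)*(q 1) + ((en p + 1)⁻¹)*(p 0)*(p 1)^3*(q 0)*(q 2) - ((en p + 1)⁻¹)*(p 0)^2*(p 2)^2*(q 1)*(q 2) - ((en p + 1)⁻¹)*(p 0)^2*(p 1)*(p 2)*(q 0)^2 - ((en p + 1)⁻¹)*(p 0)^2*(p 1)^2*(q 1)*(q 2) + ((en p + 1)⁻¹)*(p 0)^3*(p 2)*(q 0)*(q 1) + ((en p + 1)⁻¹)*(p 0)^3*(p 1)*(q 0)*(q 2) - ((en p + 1)⁻¹)*(p 0)^4*(q 1)*(q 2) + 2*(en p)*(p 1)*(p 2)*(q 0)^2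 - 2*(en p)*(p 0)*(p 2)*(q 0)*(q 1) - 2*(en p)*(p 0)*(p 1)*(q 0)*(q 2) + 2*(en p)*(p 0)^2*(q 1)*(q 2) - (en p)*((en p + 1)⁻¹)*(p 1)*(p 2)^3*(q 0)^2 - (en p)*((en p + 1)⁻¹)*(p 1)^3*(p 2)*(q 0)^2 + (en p)*((en p + 1)⁻¹)*(p 0)*(p 2)^3*(q 0)*(q 1) + (en p)*((en p + 1)⁻¹)*(p 0)*(p 1)*(p 2)^2*(q 0)*(q 2) + (en p)*((en p + 1)⁻¹)*(p 0)*(p 1)^2*(p 2)*(q 0)*(q 1) + (en p)*((en p + 1)⁻¹)*(p 0)*(p 1)^3*(q 0)*(q 2) - (en p)*((en p + 1)⁻¹)*(p 0)^2*(p 2)^2*(q 1)*(q 2) - (en p)*((en p + 1)⁻¹)*(p 0)^2*(p 1)*(p 2)*(q 0)^2 - (en p)*((en p + 1)⁻¹)*(p 0)^2*(p 1)^2*(q 1)*(q 2) + (en p)*((en p + 1)⁻¹)*(p 0)^3*(p 2)*(q 0)*(q 1) + (en p)*((en p + 1)⁻¹)*(p 0)^3*(p 1)*(q 0)*(q 2)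 - (en p)*((en p + 1)⁻¹)*(p 0)^4*(q 1)*(q 2) + 2*(en p)^2*(p 1)*(p 2)*(q 0)^2 - 2*(en p)^2*(p 0)*(p 2)*(q 0)*(q 1) - 2*(en p)^2*(p 0)*(p 1)*(q 0)*(q 2) + 2*(en p)^2*(p 0)^2*(q 1)*(q 2)) * ht
  · refine mul_left_cancel₀ (pow_ne_zero 2 hne) ?_
    linear_combination (1 + (q 2)^2 + 2*(q 1)^2 + 2*(q 0)^2 + (p 2)^2 + (p 2)^2*(q 2)^2 + (p 2)^2*(q 1)^2 + (p 2)^2*(q 0)^2 - (p 1)^2*(q 0)^2 + 2*(p 0)*(p 1)*(q 0)*(q 1) - (p 0)^2*(q 1)^2 - 2*(en q)^2 - (en q)^2*(p 2)^2 + 2*(en p)*(q 1)^2 + 2*(en p)*(q 0)^2 - 2*(en p)*(en q)^2 + (en p)^2*(q 1)^2 + (en p)^2*(q 0)^2 - (en p)^2*(en q)^2) * h1 + (-2 - 3*(p 2)^2 - (p 2)^4 - (p 1)^2 - (p 1)^2*(p 2)^2 - (p 0)^2 - (p 0)^2*(p 2)^2 - 2*(en p) - 2*(en p)*(p 2)^2)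 * h2 + ((p 1)^2*(p 2)^2*(q 0)^2 + (p 1)^4*(q 0)^2 - 2*(p 0)*(p 1)*(p 2)^2*(q 0)*(q 1) - 2*(p 0)*(p 1)^3*(q 0)*(q 1) + (p 0)^2*(p 2)^2*(q 1)^2 + (p 0)^2*(p 1)^2*(q 1)^2 + (p 0)^2*(p 1)^2*(q 0)^2 - 2*(p 0)^3*(p 1)*(q 0)*(q 1) + (p 0)^4*(q 1)^2 + ((en p + 1)⁻¹)*(p 1)^2*(p 2)^2*(q 0)^2 + ((en p + 1)⁻¹)*(p 1)^4*(q 0)^2 - 2*((en p + 1)⁻¹)*(p 0)*(p 1)*(p 2)^2*(q 0)*(q 1) - 2*((en p + 1)⁻¹)*(p 0)*(p 1)^3*(q 0)*(q 1) + ((en p + 1)⁻¹)*(p 0)^2*(p 2)^2*(q 1)^2 + ((en p + 1)⁻¹)*(p 0)^2*(p 1)^2*(q 1)^2 + ((en p + 1)⁻¹)*(p 0)^2*(p 1)^2*(q 0)^2 - 2*((en p + 1)⁻¹)*(p 0)^3*(p 1)*(q 0)*(q 1) + ((en p + 1)⁻¹)*(p 0)^4*(q 1)^2 - 2*(en p)*(p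 1)^2*(q 0)^2 + 4*(en p)*(p 0)*(p 1)*(q 0)*(q 1) - 2*(en p)*(p 0)^2*(q 1)^2 + (en p)*((en p + 1)⁻¹)*(p 1)^2*(p 2)^2*(q 0)^2 + (en p)*((en p + 1)⁻¹)*(p 1)^4*(q 0)^2 - 2*(en p)*((en p + 1)⁻¹)*(p 0)*(p 1)*(p 2)^2*(q 0)*(q 1) - 2*(en p)*((en p + 1)⁻¹)*(p 0)*(p 1)^3*(q 0)*(q 1) + (en p)*((en p + 1)⁻¹)*(p 0)^2*(p 2)^2*(q 1)^2 + (en p)*((en p + 1)⁻¹)*(p 0)^2*(p 1)^2*(q 1)^2 + (en p)*((en p + 1)⁻¹)*(p 0)^2*(p 1)^2*(q 0)^2 - 2*(en p)*((en p + 1)⁻¹)*(p 0)^3*(p 1)*(q 0)*(q 1) + (en p)*((en p + 1)⁻¹)*(p 0)^4*(q 1)^2 - 2*(en p)^2*(p 1)^2*(q 0)^2 + 4*(en p)^2*(p 0)*(p 1)*(q 0)*(q 1) - 2*(en p)^2*(p 0)^2*(q 1)^2) * ht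
end
end

section
/- There exists a constant c > 0 such that for all p, q ∈ ℝ³ with p ≠ q, the function Λ(p,q) = (ρ+1)²(ρτ)^{-3/2}/(p⁰q⁰) satisfies 0 ≤ Λ(p,q) ≤ c((p⁰q⁰)^{1/2}|p-q|^{-3} · 1_A(p,q) + |p-q|^{-2} · 1_{A^c}(p,q)), where A = {(p,q) : √(p⁰q⁰) ≥ |p-q|}. -/
noncomputable section
open Matrix MeasureTheory

/-- Λ(p,q) = (ρ+1)²/(p⁰q⁰) · (ρτ)^{-3/2} -/
def Lam (p q : E3) : ℝ :=
  (rel p q + 1)^2 / (en p * en q) * (rel p q * (rel p q + 2)) ^ (-(3:ℝ)/2)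

set_option maxHeartbeats 1000000 in
theorem Lam_bound :
    ∃ c > 0, ∀ p q : E3, p ≠ q →
      0 ≤ Lam p q ∧
      Lam p q ≤ c * (if Real.sqrt (en p * en q) ≥ ‖p - q‖
        then Real.sqrt (en p * en q) / ‖p - q‖^3
        else 1 / ‖p - q‖^2) := by
  refine ⟨4, by norm_num, fun p q h => ?_⟩
  set a := ‖p‖ with ha_def
  set b := ‖q‖ with hb_def
  set t := (inner ℝ p q : ℝ) with ht_def
  set s := en p * en q with hs_def
  set ρ := rel p q with hrho_def
  set r := ‖p - q‖ with hr_def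
  have hen1 : ∀ x : E3, 1 ≤ en x := by
    intro x
    rw [en]
    exact Real.one_le_sqrt.mpr (le_add_of_nonneg_right (sq_nonneg _))
  have hs1 : 1 ≤ s := one_le_mul_of_one_le_of_one_le (hen1 p) (hen1 q)
  have hs0 : 0 < s := lt_of_lt_of_le one_pos hs1
  have hr0 : 0 < r := by
    rw [hr_def]; exact norm_pos_iff.mpr (sub_ne_zero_of_ne h)
  have hs2 : s^2 = (1 + a^2) * (1 + b^2) := by
    rw [hs_def, mul_pow, en, en, Real.sq_sqrt (by positivity), Real.sq_sqrt (by positivity)]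
  have ht : t ≤ a * b := real_inner_le_norm p q
  have hr2 : r^2 = a^2 - 2*t + b^2 := by
    rw [hr_def, ha_def, hb_def, ht_def, @norm_sub_sq_real]
  have hab0 : 0 ≤ a * b := mul_nonneg (norm_nonneg _) (norm_nonneg _)
  have hrho : ρ = s - t - 1 := rfl
  -- key: r² ≤ 2 s ρ
  have key : r^2 ≤ 2 * s * ρ := by
    nlinarith [sq_nonneg (s - 1 - a*b), mul_nonneg (sub_nonneg.mpr hs1) (sub_nonneg.mpr ht)]
  have hρ0 : 0 < ρ := by nlinarith [sq_nonneg r]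
  have hD0 : 0 < ρ * (ρ + 2) := mul_pos hρ0 (by linarith)
  set σ := Real.sqrt (ρ * (ρ + 2)) with hσ_def
  have hσ0 : 0 < σ := Real.sqrt_pos.mpr hD0
  have hσ2 : σ^2 = ρ * (ρ + 2) := Real.sq_sqrt hD0.le
  have hLam : Lam p q = (ρ+1)^2 / s * (1 / σ^3) := by
    rw [Lam]
    congr 1
    rw [hσ_def, Real.sqrt_eq_rpow, ← Real.rpow_natCast ((ρ*(ρ+2)) ^ ((1:ℝ)/2)) 3,
      ← Real.rpow_mul hD0.le, one_div, ← Real.rpow_neg hD0.le]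
    norm_num
    rfl
  have hnn : 0 ≤ Lam p q := by
    rw [hLam]
    exact mul_nonneg (div_nonneg (sq_nonneg _) hs0.le)
      (div_nonneg one_pos.le (pow_nonneg hσ0.le 3))
  refine ⟨hnn, ?_⟩
  set w := Real.sqrt s with hw_def
  have hw2 : w^2 = s := Real.sq_sqrt hs0.le
  have hw0 : 0 < w := Real.sqrt_pos.mpr hs0
  have hsσ : r^2 ≤ s * σ^2 := by nlinarith [mul_nonneg hs0.le (sq_nonneg ρ)]
  rw [hLam]
  split_ifs with hA
  · -- case A : w ≥ r
    have hsr : r^2 ≤ s := by nlinarith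
    have hu : (ρ+1)^2 * r^2 ≤ 2 * (s * σ^2) := by
      rcases le_or_gt ((ρ+1)^2) 2 with h2 | h2
      · nlinarith [sq_nonneg r]
      · nlinarith [sq_nonneg σ]
    have hσr : r ≤ σ * w := by nlinarith [mul_pos hσ0 hw0]
    rw [div_mul_div_comm, mul_one, ← mul_div_assoc,
      div_le_div_iff₀ (by positivity) (by positivity)]
    nlinarith [mul_le_mul_of_nonneg_right hu hr0.le,
      mul_le_mul_of_nonneg_left hσr (by positivity : (0:ℝ) ≤ 2 * (s * σ^2)),
      mul_pos (mul_pos hs0 hw0) (pow_pos hσ0 3)]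
  · -- case B : r > w
    have hrs : s < r^2 := by
      have : w < r := not_le.mp hA
      nlinarith
    have hσ1 : 1 < σ^2 := by nlinarith
    have hu2 : (ρ+1)^2 ≤ 2*σ^2 := by nlinarith
    have hρσ : ρ ≤ σ := by nlinarith
    rw [div_mul_div_comm, mul_one, mul_one_div,
      div_le_div_iff₀ (by positivity) (by positivity)]
    have t1 : (ρ+1)^2 * r^2 ≤ 2*σ^2 * r^2 :=
      mul_le_mul_of_nonneg_right hu2 (sq_nonneg r)
    have t2 : 2*σ^2 * r^2 ≤ 2*σ^2 * (2*s*ρ) :=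
      mul_le_mul_of_nonneg_left key (by positivity)
    have t3 : 4*s*(σ^2*ρ) ≤ 4*s*(σ^2*σ) :=
      mul_le_mul_of_nonneg_left
        (mul_le_mul_of_nonneg_left hρσ (sq_nonneg σ)) (by positivity)
    nlinarith [t1, t2, t3]
end
end

section
/- There exists c > 0 such that for all p, q ∈ ℝ³ with p ≠ q: |B(p,q)| ≤ c(min(p⁰,q⁰)|p-q|^{-2} 1_A(p,q) + 1_{A^c}(p,q)), where B(p,q) = Λ(p,q)(ρ+2)(q-p), Λ(p,q) = (ρ+1)²(ρτ)^{-3/2}/(p⁰q⁰), ρ = p⁰q⁰-p·q-1, τ = ρ+2, and A = {(p,q) : √(p⁰q⁰) ≥ |p-q|}. -/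
noncomputable section
open Matrix MeasureTheory

/-- the drift B(p,q) = Λ(p,q)(ρ+2)(q-p) -/
def Bdrift (p q : E3) : E3 := (Lam p q * (rel p q + 2)) • (q - p)

private lemma sq_le_imp {a b : ℝ} (ha : 0 ≤ a) (hb : 0 ≤ b) (h : a^2 ≤ b^2) : a ≤ b := by
  nlinarith

lemma en_nonneg (p : E3) : 0 ≤ en p := Real.sqrt_nonneg _

lemma en_sq (p : E3) : (en p)^2 = 1 + ‖p‖^2 := Real.sq_sqrt (by positivity)

lemma en_one_le (p : E3) : 1 ≤ en p := by
  nlinarith [en_nonneg p, en_sq p, sq_nonneg ‖p‖]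

lemma norm_le_en (p : E3) : ‖p‖ ≤ en p := by
  nlinarith [en_sq p, en_one_le p, norm_nonneg p]

lemma inner_add_one_le (p q : E3) : (inner ℝ p q : ℝ) + 1 ≤ en p * en q := by
  have hs : (inner ℝ p q : ℝ) ≤ ‖p‖ * ‖q‖ := real_inner_le_norm p q
  have hab2 : (en p * en q)^2 = (1 + ‖p‖^2) * (1 + ‖q‖^2) := by
    rw [mul_pow, en_sq, en_sq]
  have hab : ‖p‖ * ‖q‖ + 1 ≤ en p * en q := by
    refine sq_le_imp (by positivity) (mul_nonneg (en_nonneg p) (en_nonneg q)) ?_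
    nlinarith [sq_nonneg (‖p‖ - ‖q‖)]
  linarith

lemma rel_nonneg (p q : E3) : 0 ≤ rel p q := by
  have := inner_add_one_le p q; rw [rel]; linarith

lemma key_ineq (p q : E3) : ‖p - q‖^2 ≤ 2 * (en p * en q) * rel p q := by
  have hs : |(inner ℝ p q : ℝ)| ≤ ‖p‖ * ‖q‖ := abs_real_inner_le_norm p q
  have hs2 : ((inner ℝ p q : ℝ))^2 ≤ ‖p‖^2 * ‖q‖^2 := by
    nlinarith [le_abs_self ((inner ℝ p q : ℝ)), neg_abs_le ((inner ℝ p q : ℝ)),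
      norm_nonneg p, norm_nonneg q]
  have hab2 : (en p * en q)^2 = (1 + ‖p‖^2) * (1 + ‖q‖^2) := by
    rw [mul_pow, en_sq, en_sq]
  have h1 := inner_add_one_le p q
  have h0 := rel_nonneg p q
  have hexp : ‖p - q‖^2 = ‖p‖^2 - 2 * (inner ℝ p q : ℝ) + ‖q‖^2 := norm_sub_sq_real p q
  rw [rel] at *
  rw [hexp]
  nlinarith [mul_nonneg h0 (show (0:ℝ) ≤ en p * en q - ((inner ℝ p q:ℝ)) - 1 by linarith)]

lemma en_le_add (p q : E3) : en p ≤ en q + ‖p - q‖ := by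
  have hPQ : ‖p‖ ≤ ‖q‖ + ‖p - q‖ := by
    have := abs_norm_sub_norm_le p q; rw [abs_le] at this; linarith [this.2]
  refine sq_le_imp (en_nonneg p) (add_nonneg (en_nonneg q) (norm_nonneg _)) ?_
  nlinarith [en_sq p, en_sq q, norm_le_en q, norm_nonneg (p - q), norm_nonneg p, norm_nonneg q]

lemma en_sub_le (p q : E3) : |en p - en q| ≤ ‖p - q‖ := by
  rw [abs_le]
  constructor
  · have := en_le_add q p
    rw [norm_sub_rev] at this
    linarith
  · linarith [en_le_add p q]

private lemma rpow32_of_sq {u : ℝ} (hu : 0 ≤ u) : (u^2) ^ ((3:ℝ)/2) = u^3 := by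
  rw [← Real.rpow_natCast u 2, ← Real.rpow_mul hu, ← Real.rpow_natCast u 3]
  norm_num

private lemma two_rpow32_le : (2:ℝ) ^ ((3:ℝ)/2) ≤ 4 := by
  have h := Real.rpow_le_rpow_of_exponent_le (one_le_two) (show (3:ℝ)/2 ≤ 2 by norm_num)
  calc (2:ℝ) ^ ((3:ℝ)/2) ≤ (2:ℝ) ^ (2:ℝ) := h
  _ = 4 := by
      rw [show (2:ℝ) = ((2:ℕ):ℝ) by norm_num, Real.rpow_natCast]; norm_num

set_option maxHeartbeats 1000000 in
lemma main_est (a b w ρ : ℝ) (ha : 1 ≤ a) (hb : 1 ≤ b) (hw : 0 < w) (hρ : 0 ≤ ρ)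
    (hkey : w^2 ≤ 2*(a*b)*ρ) (hab : |a - b| ≤ w) (hwab : w ≤ a + b) :
    (ρ+1)^2 / (a*b) * ((ρ*(ρ+2)) ^ (-(3:ℝ)/2)) * (ρ+2) * w
      ≤ 64 * (if Real.sqrt (a*b) ≥ w then min a b / w^2 else 1) := by
  have hE : (0:ℝ) < a*b := by nlinarith
  have hρpos : 0 < ρ := by nlinarith
  have hxpos0 : 0 < ρ*(ρ+2) := by nlinarith
  have hyneg : (ρ*(ρ+2)) ^ (-(3:ℝ)/2) = ((ρ*(ρ+2)) ^ ((3:ℝ)/2))⁻¹ := by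
    rw [show (-(3:ℝ)/2) = -((3:ℝ)/2) by norm_num, Real.rpow_neg hxpos0.le]
  rw [hyneg]
  obtain ⟨x, hxdef⟩ : ∃ x, ρ*(ρ+2) = x := ⟨_, rfl⟩
  have hx1eq : (x + 1 : ℝ) = (ρ+1)^2 := by rw [← hxdef]; ring
  have hxpos : 0 < x := hxdef ▸ hxpos0
  have hnum : (ρ+1)^2 * (ρ+2) ≤ 2 * (x+1) ^ ((3:ℝ)/2) := by
    have h2 : (x+1) ^ ((3:ℝ)/2) = (ρ+1)^3 := by
      rw [hx1eq, rpow32_of_sq (by linarith)]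
    rw [h2]; nlinarith [sq_nonneg (ρ+1)]
  have hyv : ∃ y, x ^ ((3:ℝ)/2) = y := ⟨_, rfl⟩
  obtain ⟨y, hydef⟩ := hyv
  have hy : 0 < y := hydef ▸ Real.rpow_pos_of_pos hxpos _
  rw [hxdef, hydef]
  have hxE : w^2 ≤ (a*b)*x := by rw [← hxdef]; nlinarith
  have hxp1 : (0:ℝ) < x + 1 := by linarith
  have hLHS : (ρ+1)^2 / (a*b) * y⁻¹ * (ρ+2) * w = ((ρ+1)^2*(ρ+2)*w)/((a*b)*y) := by
    field_simp
  rw [hLHS]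
  by_cases hA : Real.sqrt (a*b) ≥ w
  · rw [if_pos hA]
    have hw2 : w^2 ≤ a*b := by
      nlinarith [Real.sq_sqrt hE.le, Real.sqrt_nonneg (a*b)]
    have hm1 : 1 ≤ min a b := le_min ha hb
    have hmM : a*b ≤ 4*(min a b)^2 := by
      have h1 : min a b * max a b = a*b := min_mul_max a b
      have h2 : max a b - min a b = |a - b| := by rw [max_sub_min_eq_abs, abs_sub_comm]
      have h3 : max a b ≤ min a b + w := by linarith
      have hw2m : w ≤ 2*(min a b) := by nlinarith
      nlinarith [le_max_left a b]
    have hsab : Real.sqrt (a*b) ≤ 2*(min a b) := by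
      calc Real.sqrt (a*b) ≤ Real.sqrt (4*(min a b)^2) := Real.sqrt_le_sqrt hmM
      _ = 2*(min a b) := by
          rw [show (4:ℝ)*(min a b)^2 = (2*(min a b))^2 by ring]
          exact Real.sqrt_sq (by linarith)
    have hc1 : (x+1) ^ ((3:ℝ)/2) * w^3 ≤ (2*(a*b)) ^ ((3:ℝ)/2) * y := by
      calc (x+1) ^ ((3:ℝ)/2) * w^3
          = ((x+1) * w^2) ^ ((3:ℝ)/2) := by
            rw [Real.mul_rpow hxp1.le (by positivity), rpow32_of_sq hw.le]
        _ ≤ ((2*(a*b)) * x) ^ ((3:ℝ)/2) := by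
            refine Real.rpow_le_rpow (by positivity) ?_ (by norm_num)
            nlinarith [mul_le_mul_of_nonneg_left hw2 hxpos.le]
        _ = (2*(a*b)) ^ ((3:ℝ)/2) * x ^ ((3:ℝ)/2) := Real.mul_rpow (by positivity) hxpos.le
        _ = (2*(a*b)) ^ ((3:ℝ)/2) * y := by rw [hydef]
    have hc2 : (2*(a*b)) ^ ((3:ℝ)/2) ≤ 8 * ((a*b) * (min a b)) := by
      have e1 : (2*(a*b)) ^ ((3:ℝ)/2) = 2 ^ ((3:ℝ)/2) * ((a*b) * (a*b) ^ ((1:ℝ)/2)) := by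
        rw [Real.mul_rpow (by norm_num) hE.le]
        congr 1
        rw [show ((3:ℝ)/2) = 1 + (1:ℝ)/2 by norm_num, Real.rpow_add hE, Real.rpow_one]
      rw [e1]
      have e2 : (a*b) ^ ((1:ℝ)/2) ≤ 2*(min a b) := by
        rw [show ((1:ℝ)/2) = 1/2 by norm_num, ← Real.sqrt_eq_rpow]
        exact hsab
      have e3 : 0 ≤ (a*b) ^ ((1:ℝ)/2) := Real.rpow_nonneg hE.le _
      have t1 : a*b*((a*b) ^ ((1:ℝ)/2)) ≤ a*b*(2*(min a b)) :=
        mul_le_mul_of_nonneg_left e2 hE.le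
      have t2 : (2:ℝ) ^ ((3:ℝ)/2) * (a*b*((a*b) ^ ((1:ℝ)/2))) ≤ 4 * (a*b*((a*b) ^ ((1:ℝ)/2))) :=
        mul_le_mul_of_nonneg_right two_rpow32_le (mul_nonneg hE.le e3)
      nlinarith [t1, t2, mul_nonneg hE.le e3]
    rw [show (64:ℝ) * (min a b/w^2) = (64*(min a b))/w^2 by ring,
      div_le_div_iff₀ (by positivity) (by positivity)]
    calc (ρ+1)^2*(ρ+2)*w * w^2
        = ((ρ+1)^2*(ρ+2)) * w^3 := by ring
      _ ≤ (2 * (x+1) ^ ((3:ℝ)/2)) * w^3 := by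
          apply mul_le_mul_of_nonneg_right hnum (by positivity)
      _ = 2 * ((x+1) ^ ((3:ℝ)/2) * w^3) := by ring
      _ ≤ 2 * ((2*(a*b)) ^ ((3:ℝ)/2) * y) := by
          apply mul_le_mul_of_nonneg_left hc1 (by norm_num)
      _ ≤ 2 * ((8 * ((a*b)*(min a b))) * y) := by
          apply mul_le_mul_of_nonneg_left (mul_le_mul_of_nonneg_right hc2 hy.le) (by norm_num)
      _ ≤ 64*(min a b)*((a*b)*y) := by
          have hmnn : (0:ℝ) ≤ min a b := by linarith
          nlinarith [mul_pos hE hy, mul_nonneg (mul_nonneg hE.le hmnn) hy.le]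
  · rw [if_neg hA, mul_one, div_le_iff₀ (by positivity)]
    have hab_lt : a*b < w^2 := by
      have h1 : Real.sqrt (a*b) < w := lt_of_not_ge hA
      nlinarith [Real.sq_sqrt hE.le, Real.sqrt_nonneg (a*b)]
    have hx1 : 1 < x := by nlinarith
    have hc : (x+1) ^ ((3:ℝ)/2) ≤ 4*y := by
      calc (x+1) ^ ((3:ℝ)/2) ≤ (2*x) ^ ((3:ℝ)/2) :=
            Real.rpow_le_rpow (by linarith) (by linarith) (by norm_num)
        _ = 2 ^ ((3:ℝ)/2) * x ^ ((3:ℝ)/2) := Real.mul_rpow (by norm_num) hxpos.le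
        _ = 2 ^ ((3:ℝ)/2) * y := by rw [hydef]
        _ ≤ 4*y := mul_le_mul_of_nonneg_right two_rpow32_le hy.le
    have hwE : w ≤ 2*(a*b) := by nlinarith
    calc (ρ+1)^2*(ρ+2)*w ≤ (2 * (x+1) ^ ((3:ℝ)/2)) * w := by
          apply mul_le_mul_of_nonneg_right hnum hw.le
      _ ≤ (2 * (4*y)) * w := by
          apply mul_le_mul_of_nonneg_right (by linarith) hw.le
      _ = 8 * y * w := by ring
      _ ≤ 8 * y * (2*(a*b)) := by
          apply mul_le_mul_of_nonneg_left hwE (by positivity)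
      _ ≤ 64 * ((a*b)*y) := by nlinarith [mul_pos hE hy]

theorem B_bound :
    ∃ c > 0, ∀ p q : E3, p ≠ q →
      ‖Bdrift p q‖ ≤ c * (if Real.sqrt (en p * en q) ≥ ‖p - q‖
        then min (en p) (en q) / ‖p - q‖^2
        else 1) := by
  refine ⟨64, by norm_num, fun p q hpq => ?_⟩
  have ha1 := en_one_le p
  have hb1 := en_one_le q
  have hρ := rel_nonneg p q
  have hkey := key_ineq p q
  have hw : 0 < ‖p - q‖ := by
    rw [norm_pos_iff]
    exact sub_ne_zero.mpr hpq
  have hwab : ‖p - q‖ ≤ en p + en q :=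
    le_trans (norm_sub_le p q) (add_le_add (norm_le_en p) (norm_le_en q))
  have hE : 0 < en p * en q := by nlinarith
  have hρpos : 0 < rel p q := by nlinarith
  have hxpos : 0 < rel p q * (rel p q + 2) := by nlinarith
  have hLnn : 0 ≤ Lam p q * (rel p q + 2) := by
    rw [Lam]
    have h2 : 0 ≤ (rel p q * (rel p q + 2)) ^ (-(3:ℝ)/2) := Real.rpow_nonneg hxpos.le _
    have h3 : 0 ≤ (rel p q + 1)^2 / (en p * en q) := div_nonneg (sq_nonneg _) hE.le
    nlinarith [mul_nonneg h3 h2]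
  have hBnorm : ‖Bdrift p q‖ = Lam p q * (rel p q + 2) * ‖p - q‖ := by
    rw [Bdrift, norm_smul, Real.norm_eq_abs, abs_of_nonneg hLnn, norm_sub_rev q p]
  rw [hBnorm]
  calc Lam p q * (rel p q + 2) * ‖p - q‖
      = (rel p q + 1)^2 / (en p * en q)
          * ((rel p q * (rel p q + 2)) ^ (-(3:ℝ)/2)) * (rel p q + 2) * ‖p - q‖ := by
        rw [Lam]
    _ ≤ _ := main_est (en p) (en q) ‖p - q‖ (rel p q) ha1 hb1 hw hρ hkey
        (en_sub_le p q) hwab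
end
end

section
/- Let Ψ : [0,∞) → [0,∞) be defined by Ψ(x) = x(1 - log x) for 0 < x ≤ 1, Ψ(0) = 0, and Ψ(x) = x for x > 1. Let T > 0 and let γ ∈ L¹([0,T]), ρ ∈ L^∞([0,T]) be nonnegative functions satisfying ρ(t) ≤ ρ(0) + ∫₀ᵗ γ(s)Ψ(ρ(s)) ds for every t ∈ [0,T]. If ρ(0) = 0, then ρ(t) = 0 for all t ∈ [0,T]. -/
noncomputable section
open Matrix MeasureTheory

/-- the function Ψ of Definition 1.1 -/
def Psi (x : ℝ) : ℝ := if x ≤ 1 then x * (1 - Real.log x) else x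

lemma psi_cont : Continuous Psi := by
  have h1 : Continuous fun x : ℝ => x * (1 - Real.log x) := by
    have : (fun x : ℝ => x * (1 - Real.log x)) = fun x : ℝ => x - x * Real.log x := by
      funext x; ring
    rw [this]
    exact continuous_id.sub Real.continuous_mul_log
  exact Continuous.if_le h1 continuous_id continuous_id continuous_const
    (by intro x hx; simp [hx, Real.log_one])

lemma psi_core_mono : MonotoneOn (fun x : ℝ => x * (1 - Real.log x)) (Set.Icc 0 1) := by
  apply monotoneOn_of_deriv_nonneg (convex_Icc 0 1)
  · have : (fun x : ℝ => x * (1 - Real.log x)) = fun x : ℝ => x - x * Real.log x := by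
      funext x; ring
    rw [this]
    exact (continuous_id.sub Real.continuous_mul_log).continuousOn
  · intro x hx
    rw [interior_Icc] at hx
    exact ((hasDerivAt_id x).mul ((hasDerivAt_const x (1:ℝ)).sub
      (Real.hasDerivAt_log hx.1.ne'))).differentiableAt.differentiableWithinAt
  · intro x hx
    rw [interior_Icc] at hx
    have hd : HasDerivAt (fun x : ℝ => x * (1 - Real.log x)) (-Real.log x) x := by
      have := (hasDerivAt_id x).mul ((hasDerivAt_const x (1:ℝ)).sub
        (Real.hasDerivAt_log hx.1.ne'))
      refine this.congr_deriv ?_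
      simp only [id, one_mul, zero_sub, mul_neg, Pi.sub_apply, mul_inv_cancel₀ hx.1.ne']
      ring
    rw [hd.deriv]
    simp only [Left.nonneg_neg_iff]
    exact Real.log_nonpos hx.1.le hx.2.le

lemma psi_mono {x y : ℝ} (hx : 0 ≤ x) (hxy : x ≤ y) : Psi x ≤ Psi y := by
  unfold Psi
  by_cases hy : y ≤ 1
  · rw [if_pos (hxy.trans hy), if_pos hy]
    exact psi_core_mono ⟨hx, hxy.trans hy⟩ ⟨hx.trans hxy, hy⟩ hxy
  · rw [if_neg hy]
    push_neg at hy
    by_cases hx1 : x ≤ 1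
    · rw [if_pos hx1]
      have h1 : x * (1 - Real.log x) ≤ 1 * (1 - Real.log 1) :=
        psi_core_mono ⟨hx, hx1⟩ (by constructor <;> norm_num) hx1
      simp only [Real.log_one] at h1
      linarith
    · rw [if_neg hx1]; exact hxy

lemma psi_nonneg {x : ℝ} (hx : 0 ≤ x) : 0 ≤ Psi x := by
  unfold Psi
  by_cases h : x ≤ 1
  · rw [if_pos h]
    have := Real.log_nonpos hx h
    nlinarith
  · rw [if_neg h]; linarith [not_le.1 h]

lemma psi_le {x : ℝ} (hx : 0 ≤ x) : Psi x ≤ max 1 x := by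
  by_cases h : x ≤ 1
  · have : Psi x ≤ Psi 1 := psi_mono hx h
    have h1 : Psi 1 = 1 := by simp [Psi, Real.log_one]
    rw [h1] at this
    exact this.trans (le_max_left _ _)
  · have : Psi x = x := if_neg h
    rw [this]; exact le_max_right _ _


lemma primitive_zero (f : ℝ → ℝ) : (∫ s in Set.Icc (0:ℝ) 0, f s) = 0 := by
  rw [Set.Icc_self]
  have : (volume : Measure ℝ).restrict {(0:ℝ)} = 0 := by
    simp [Measure.restrict_eq_zero]
  rw [this, integral_zero_measure]

lemma icc_int_eq (f : ℝ → ℝ) {b : ℝ} (hb : 0 ≤ b) :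
    (∫ s in Set.Icc (0:ℝ) b, f s) = ∫ s in (0:ℝ)..b, f s := by
  rw [intervalIntegral.integral_of_le hb, integral_Icc_eq_integral_Ioc]

lemma sub_intervalIntegrable {f : ℝ → ℝ} {T a b : ℝ}
    (hf : IntegrableOn f (Set.Icc 0 T)) (h0a : 0 ≤ a) (hab : a ≤ b) (hbT : b ≤ T) :
    IntervalIntegrable f volume a b := by
  apply IntegrableOn.intervalIntegrable
  apply hf.mono_set
  rw [Set.uIcc_of_le hab]
  exact Set.Icc_subset_Icc h0a hbT

lemma primitive_add (f : ℝ → ℝ) {T a b : ℝ} (hf : IntegrableOn f (Set.Icc 0 T))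
    (h0a : 0 ≤ a) (hab : a ≤ b) (hbT : b ≤ T) :
    (∫ s in Set.Icc 0 b, f s) = (∫ s in Set.Icc 0 a, f s) + ∫ s in a..b, f s := by
  rw [icc_int_eq f (h0a.trans hab), icc_int_eq f h0a]
  exact (intervalIntegral.integral_add_adjacent_intervals
    (sub_intervalIntegrable hf le_rfl h0a (hab.trans hbT))
    (sub_intervalIntegrable hf h0a hab hbT)).symm

lemma primitive_mono (f : ℝ → ℝ) {T a b : ℝ} (hf : IntegrableOn f (Set.Icc 0 T))
    (hfpos : ∀ s ∈ Set.Icc 0 T, 0 ≤ f s)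
    (h0a : 0 ≤ a) (hab : a ≤ b) (hbT : b ≤ T) :
    (∫ s in Set.Icc 0 a, f s) ≤ ∫ s in Set.Icc 0 b, f s := by
  rw [primitive_add f hf h0a hab hbT]
  have : 0 ≤ ∫ s in a..b, f s := by
    apply intervalIntegral.integral_nonneg hab
    intro u hu
    exact hfpos u ⟨h0a.trans hu.1, hu.2.trans hbT⟩
  linarith

lemma piece_zero {f g : ℝ → ℝ} {a b B : ℝ} (hab : a ≤ b)
    (hg : IntervalIntegrable g volume a b)
    (hfg : ∀ s ∈ Set.Ioc a b, ‖g s‖ ≤ B * f s)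
    (hf : IntervalIntegrable f volume a b)
    (hfz : (∫ s in a..b, f s) = 0) :
    (∫ s in a..b, g s) = 0 := by
  have h1 : ‖∫ s in a..b, g s‖ ≤ |∫ s in a..b, B * f s| := by
    apply intervalIntegral.norm_integral_le_abs_of_norm_le
    · rw [Set.uIoc_of_le hab]
      exact (ae_restrict_iff' measurableSet_Ioc).2 (Filter.Eventually.of_forall hfg)
    · exact hf.const_mul B
  rw [intervalIntegral.integral_const_mul, hfz, mul_zero, abs_zero] at h1
  have h2 := norm_nonneg (∫ s in a..b, g s)
  have : ‖∫ s in a..b, g s‖ = 0 := le_antisymm h1 h2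
  simpa using this

lemma key_ineq_s19 (T : ℝ) (γ : ℝ → ℝ) (hγpos : ∀ s ∈ Set.Icc 0 T, 0 ≤ γ s)
    (hγint : IntegrableOn γ (Set.Icc 0 T))
    (F G : ℝ → ℝ) (hG : Continuous G)
    (hFd : ∀ u, HasDerivAt F (G u) u)
    (hGm : MonotoneOn G (Set.Icc 0 (∫ s in Set.Icc 0 T, γ s)))
    {t : ℝ} (ht : t ∈ Set.Icc 0 T) :
    (∫ s in Set.Icc 0 t, γ s * G (∫ r in Set.Icc 0 s, γ r))
      ≤ F (∫ s in Set.Icc 0 t, γ s) - F 0 := by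
  obtain ⟨h0t, htT⟩ := ht
  set Γ : ℝ → ℝ := fun u => ∫ s in Set.Icc 0 u, γ s with hΓdef
  have hΓ0 : Γ 0 = 0 := primitive_zero γ
  have hΓmono : ∀ a b : ℝ, 0 ≤ a → a ≤ b → b ≤ T → Γ a ≤ Γ b := fun a b ha hab hbT =>
    primitive_mono γ hγint hγpos ha hab hbT
  have hΓnn : ∀ u : ℝ, 0 ≤ u → u ≤ T → 0 ≤ Γ u := fun u hu huT => by
    have := hΓmono 0 u le_rfl hu huT; rwa [hΓ0] at this
  have hΓleT : ∀ u : ℝ, 0 ≤ u → u ≤ T → Γ u ≤ Γ T := fun u hu huT =>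
    hΓmono u T hu huT le_rfl
  have hΓcont : ContinuousOn Γ (Set.Icc 0 T) := intervalIntegral.continuousOn_primitive_Icc hγint
  set c : ℝ := Γ t with hcdef
  have hc0 : 0 ≤ c := hΓnn t h0t htT
  have hcT : c ≤ Γ T := hΓleT t h0t htT
  obtain ⟨B, hB⟩ : ∃ B : ℝ, ∀ u ∈ Set.Icc 0 (Γ T), ‖G u‖ ≤ B :=
    isCompact_Icc.exists_bound_of_continuousOn hG.continuousOn
  set g : ℝ → ℝ := fun s => γ s * G (Γ s) with hgdef
  show (∫ s in Set.Icc 0 t, g s) ≤ F c - F 0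
  have hgm : AEStronglyMeasurable g (volume.restrict (Set.Icc 0 T)) :=
    hγint.1.mul ((hG.comp_continuousOn hΓcont).aestronglyMeasurable measurableSet_Icc)
  have hgbound : ∀ s ∈ Set.Icc (0:ℝ) T, ‖g s‖ ≤ B * γ s := by
    intro s hs
    have h1 : ‖g s‖ = γ s * ‖G (Γ s)‖ := by
      rw [hgdef]; simp only [Real.norm_eq_abs, abs_mul, abs_of_nonneg (hγpos s hs)]
    rw [h1, mul_comm]
    exact mul_le_mul_of_nonneg_right (hB _ ⟨hΓnn s hs.1 hs.2, hΓleT s hs.1 hs.2⟩) (hγpos s hs)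
  have hgint : IntegrableOn g (Set.Icc 0 T) := by
    apply Integrable.mono' (hγint.const_mul B) hgm
    exact (ae_restrict_iff' measurableSet_Icc).2 (Filter.Eventually.of_forall hgbound)
  have hgiv : ∀ a b : ℝ, 0 ≤ a → a ≤ b → b ≤ T → IntervalIntegrable g volume a b :=
    fun a b ha hab hbT => sub_intervalIntegrable hgint ha hab hbT
  have hγiv : ∀ a b : ℝ, 0 ≤ a → a ≤ b → b ≤ T → IntervalIntegrable γ volume a b :=
    fun a b ha hab hbT => sub_intervalIntegrable hγint ha hab hbT
  have hG0c : G 0 ≤ G c := hGm ⟨le_rfl, hΓnn T (le_trans h0t htT) le_rfl⟩ ⟨hc0, hcT⟩ hc0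
  -- convexity helper
  have hconv : ∀ a b : ℝ, 0 ≤ a → a ≤ b → b ≤ Γ T →
      G b * (b - a) ≤ (F b - F a) + (G b - G a) * (b - a) := by
    intro a b ha hab hbT
    have hFTC : (∫ u in a..b, G u) = F b - F a :=
      intervalIntegral.integral_eq_sub_of_hasDerivAt (fun u _ => hFd u)
        (hG.intervalIntegrable a b)
    have hlow : (∫ u in a..b, (fun _ => G a) u) ≤ ∫ u in a..b, G u := by
      apply intervalIntegral.integral_mono_on hab intervalIntegrable_const
        (hG.intervalIntegrable a b)
      intro u hu
      exact hGm ⟨ha, hab.trans hbT⟩ ⟨ha.trans hu.1, hu.2.trans hbT⟩ hu.1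
    rw [intervalIntegral.integral_const, smul_eq_mul, hFTC] at hlow
    have hid : G b * (b - a) = G a * (b - a) + (G b - G a) * (b - a) := by ring
    rw [mul_comm] at hlow
    linarith
  -- main estimate for each n
  have hmain : ∀ n : ℕ, 0 < n →
      (∫ s in Set.Icc 0 t, g s) ≤ F c - F 0 + (G c - G 0) * c / n := by
    intro n hn
    have hn' : (0:ℝ) < n := Nat.cast_pos.2 hn
    rcases eq_or_lt_of_le hc0 with hc | hc
    · -- c = 0
      have hz : (∫ s in (0:ℝ)..t, g s) = 0 := by
        apply piece_zero h0t (hgiv 0 t le_rfl h0t htT)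
          (fun s hs => hgbound s ⟨hs.1.le, hs.2.trans htT⟩) (hγiv 0 t le_rfl h0t htT)
        rw [← icc_int_eq γ h0t]
        exact hc.symm
      rw [icc_int_eq g h0t, hz, ← hc]
      simp
    · -- 0 < c
      have hIVT : ∀ i : ℕ, ∃ x, x ∈ Set.Icc 0 t ∧ Γ x = min ((i:ℝ) * c / n) c := by
        intro i
        have hmem : min ((i:ℝ) * c / n) c ∈ Set.Icc (Γ 0) (Γ t) := by
          rw [hΓ0]
          exact ⟨le_min (by positivity) hc0, min_le_right _ _⟩
        obtain ⟨x, hx1, hx2⟩ :=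
          intermediate_value_Icc h0t (hΓcont.mono (Set.Icc_subset_Icc_right htT)) hmem
        exact ⟨x, hx1, hx2⟩
      choose u hu1 hu2 using hIVT
      have hval : ∀ i : ℕ, i ≤ n → Γ (u i) = i * c / n := by
        intro i hi
        rw [hu2 i, min_eq_left]
        rw [div_le_iff₀ hn']
        have : (i:ℝ) ≤ n := Nat.cast_le.2 hi
        nlinarith
      have humono : ∀ i j : ℕ, i < j → j ≤ n → u i ≤ u j := by
        intro i j hij hjn
        by_contra hcon
        push_neg at hcon
        have h1 : Γ (u j) ≤ Γ (u i) :=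
          hΓmono (u j) (u i) (hu1 j).1 hcon.le ((hu1 i).2.trans htT)
        rw [hval i (le_of_lt (lt_of_lt_of_le hij hjn)), hval j hjn] at h1
        have h3 : (j:ℝ) * c ≤ i * c := by
          have h4 := mul_le_mul_of_nonneg_right h1 (le_of_lt hn')
          rwa [div_mul_cancel₀ _ hn'.ne', div_mul_cancel₀ _ hn'.ne'] at h4
        have h5 : (i:ℝ) < j := Nat.cast_lt.2 hij
        nlinarith
      have hu0n : u 0 ≤ u n := humono 0 n hn le_rfl
      have hΓdiff : ∀ a b : ℝ, 0 ≤ a → a ≤ b → b ≤ T →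
          (∫ s in a..b, γ s) = Γ b - Γ a := by
        intro a b ha hab hbT
        have := primitive_add γ hγint ha hab hbT
        rw [hΓdef]
        simp only at this ⊢
        linarith
      have hsplit : (∫ s in Set.Icc 0 t, g s) = ∫ s in (u 0)..(u n), g s := by
        rw [icc_int_eq g h0t]
        have e1 : (∫ s in (0:ℝ)..u 0, g s) = 0 := by
          apply piece_zero (hu1 0).1 (hgiv 0 (u 0) le_rfl (hu1 0).1 ((hu1 0).2.trans htT))
            (fun s hs => hgbound s ⟨hs.1.le, (hs.2.trans (hu1 0).2).trans htT⟩)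
            (hγiv 0 (u 0) le_rfl (hu1 0).1 ((hu1 0).2.trans htT))
          rw [hΓdiff 0 (u 0) le_rfl (hu1 0).1 ((hu1 0).2.trans htT), hΓ0,
            hval 0 (Nat.zero_le n)]
          simp
        have e2 : (∫ s in (u n)..t, g s) = 0 := by
          apply piece_zero (hu1 n).2 (hgiv (u n) t (hu1 n).1 (hu1 n).2 htT)
            (fun s hs => hgbound s ⟨((hu1 n).1.trans hs.1.le), hs.2.trans htT⟩)
            (hγiv (u n) t (hu1 n).1 (hu1 n).2 htT)
          rw [hΓdiff (u n) t (hu1 n).1 (hu1 n).2 htT, hval n le_rfl, ← hcdef]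
          field_simp
          ring
        have a1 := intervalIntegral.integral_add_adjacent_intervals
          (hgiv 0 (u 0) le_rfl (hu1 0).1 ((hu1 0).2.trans htT))
          (hgiv (u 0) t (hu1 0).1 (hu1 0).2 htT)
        have a2 := intervalIntegral.integral_add_adjacent_intervals
          (hgiv (u 0) (u n) (hu1 0).1 hu0n ((hu1 n).2.trans htT))
          (hgiv (u n) t (hu1 n).1 (hu1 n).2 htT)
        rw [← a1, e1, zero_add, ← a2, e2, add_zero]
      have hsum : (∫ s in (u 0)..(u n), g s) =
          ∑ i ∈ Finset.range n, ∫ s in u i..(u (i+1)), g s := by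
        refine (intervalIntegral.sum_integral_adjacent_intervals (fun i hi => ?_)).symm
        exact hgiv (u i) (u (i+1)) (hu1 i).1 (humono i (i+1) (Nat.lt_succ_self i) hi)
          ((hu1 (i+1)).2.trans htT)
      have hpiece : ∀ i : ℕ, i < n →
          (∫ s in u i..(u (i+1)), g s) ≤ G (((i:ℝ)+1) * c / n) * (c / n) := by
        intro i hi
        have hi1 : (i:ℕ) + 1 ≤ n := hi
        have hii : u i ≤ u (i+1) := humono i (i+1) (Nat.lt_succ_self i) hi1
        have hmemT : u (i+1) ≤ T := (hu1 (i+1)).2.trans htT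
        have hstep : (∫ s in u i..(u (i+1)), g s) ≤
            ∫ s in u i..(u (i+1)), γ s * G (Γ (u (i+1))) := by
          apply intervalIntegral.integral_mono_on hii
            (hgiv (u i) (u (i+1)) (hu1 i).1 hii hmemT)
            ((hγiv (u i) (u (i+1)) (hu1 i).1 hii hmemT).mul_const _)
          intro s hs
          have hs0 : 0 ≤ s := (hu1 i).1.trans hs.1
          have hsT : s ≤ T := hs.2.trans hmemT
          have h1 : Γ s ≤ Γ (u (i+1)) := hΓmono s _ hs0 hs.2 hmemT
          have h2 : G (Γ s) ≤ G (Γ (u (i+1))) :=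
            hGm ⟨hΓnn s hs0 hsT, hΓleT s hs0 hsT⟩
              ⟨hΓnn _ (hu1 (i+1)).1 hmemT, hΓleT _ (hu1 (i+1)).1 hmemT⟩ h1
          exact mul_le_mul_of_nonneg_left h2 (hγpos s ⟨hs0, hsT⟩)
        have hrhs : (∫ s in u i..(u (i+1)), γ s * G (Γ (u (i+1)))) =
            G (Γ (u (i+1))) * (Γ (u (i+1)) - Γ (u i)) := by
          have := intervalIntegral.integral_mul_const (G (Γ (u (i+1)))) γ
            (a := u i) (b := u (i+1)) (μ := volume)
          rw [this, hΓdiff (u i) (u (i+1)) (hu1 i).1 hii hmemT, mul_comm]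
        have hvi : Γ (u i) = (i:ℝ) * c / n := by
          have := hval i (le_of_lt hi); push_cast at this ⊢; linarith
        have hvi1 : Γ (u (i+1)) = ((i:ℝ)+1) * c / n := by
          have := hval (i+1) hi1; push_cast at this ⊢; linarith
        rw [hrhs] at hstep
        rw [hvi, hvi1] at hstep
        have hd : ((i:ℝ)+1) * c / (n:ℝ) - (i:ℝ) * c / (n:ℝ) = c / (n:ℝ) := by ring
        rw [hd] at hstep
        exact hstep
      -- combine
      rw [hsplit, hsum]
      have hstep2 : ∑ i ∈ Finset.range n, (∫ s in u i..(u (i+1)), g s) ≤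
          ∑ i ∈ Finset.range n,
            ((F (((i:ℝ)+1) * c / n) - F ((i:ℝ) * c / n)) +
              (G (((i:ℝ)+1) * c / n) - G ((i:ℝ) * c / n)) * (c / n)) := by
        apply Finset.sum_le_sum
        intro i hi
        have hi' : i < n := Finset.mem_range.1 hi
        have h1 := hpiece i hi'
        have hb : ((i:ℝ)+1) * c / n ≤ c := by
          rw [div_le_iff₀ hn']
          have : ((i:ℝ)+1) ≤ n := by exact_mod_cast hi'
          nlinarith
        have hab' : (i:ℝ) * c / n ≤ ((i:ℝ)+1) * c / n := by
          rw [div_le_div_iff₀ hn' hn']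
          nlinarith
        have h2 := hconv ((i:ℝ) * c / n) (((i:ℝ)+1) * c / n) (by positivity) hab'
          (hb.trans hcT)
        have hd : ((i:ℝ)+1) * c / n - (i:ℝ) * c / n = c / n := by ring
        rw [hd] at h2
        linarith
      refine hstep2.trans ?_
      rw [Finset.sum_add_distrib, ← Finset.sum_mul]
      have en : ((n:ℝ)) * c / n = c := by field_simp
      have e0 : ((0:ℕ):ℝ) * c / n = 0 := by simp
      have t1 : ∑ i ∈ Finset.range n, (F (((i:ℝ)+1) * c / n) - F ((i:ℝ) * c / n)) =
          F c - F 0 := by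
        have h := Finset.sum_range_sub (fun i => F ((i:ℝ) * c / n)) n
        simp only [Nat.cast_add, Nat.cast_one] at h
        rw [h, en, e0]
      have t2 : ∑ i ∈ Finset.range n, (G (((i:ℝ)+1) * c / n) - G ((i:ℝ) * c / n)) =
          G c - G 0 := by
        have h := Finset.sum_range_sub (fun i => G ((i:ℝ) * c / n)) n
        simp only [Nat.cast_add, Nat.cast_one] at h
        rw [h, en, e0]
      rw [t1, t2]
      rw [mul_div_assoc]
  -- conclude by letting n → ∞
  have key : ∀ ε : ℝ, 0 < ε → (∫ s in Set.Icc 0 t, g s) ≤ F c - F 0 + ε := by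
    intro ε hε
    obtain ⟨n, hn⟩ := exists_nat_gt (max 1 ((G c - G 0) * c / ε))
    have h1n : (1:ℝ) < n := lt_of_le_of_lt (le_max_left _ _) hn
    have hn0 : 0 < n := by exact_mod_cast zero_lt_one.trans h1n
    have hn' : (0:ℝ) < n := Nat.cast_pos.2 hn0
    refine (hmain n hn0).trans ?_
    have h5 : (G c - G 0) * c / ε < n := lt_of_le_of_lt (le_max_right _ _) hn
    rw [div_lt_iff₀ hε] at h5
    have h6 : (G c - G 0) * c / n ≤ ε := by
      rw [div_le_iff₀ hn']
      nlinarith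
    linarith
  by_contra hcon
  push_neg at hcon
  have h7 := key (((∫ s in Set.Icc 0 t, g s) - (F c - F 0)) / 2) (by linarith)
  linarith

theorem gronwall_Psi (T : ℝ) (hT : 0 < T) (γ ρ : ℝ → ℝ)
    (hγpos : ∀ t ∈ Set.Icc 0 T, 0 ≤ γ t)
    (hρpos : ∀ t ∈ Set.Icc 0 T, 0 ≤ ρ t)
    (hγint : IntegrableOn γ (Set.Icc 0 T))
    (hρmeas : Measurable ρ)
    (hρbdd : ∃ C : ℝ, ∀ t ∈ Set.Icc 0 T, ρ t ≤ C)
    (hineq : ∀ t ∈ Set.Icc 0 T, ρ t ≤ ρ 0 + ∫ s in Set.Icc 0 t, γ s * Psi (ρ s))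
    (h0 : ρ 0 = 0) :
    ∀ t ∈ Set.Icc 0 T, ρ t = 0 := by
  obtain ⟨C, hC⟩ := hρbdd
  set K : ℝ := max 1 C with hKdef
  set gρ : ℝ → ℝ := fun s => γ s * Psi (ρ s) with hgρdef
  have hgρm : AEStronglyMeasurable gρ (volume.restrict (Set.Icc 0 T)) :=
    hγint.1.mul ((psi_cont.measurable.comp hρmeas).aestronglyMeasurable)
  have hgρbd : ∀ s ∈ Set.Icc (0:ℝ) T, ‖gρ s‖ ≤ K * γ s := by
    intro s hs
    have h1 : 0 ≤ Psi (ρ s) := psi_nonneg (hρpos s hs)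
    have h2 : Psi (ρ s) ≤ K := (psi_le (hρpos s hs)).trans (max_le_max le_rfl (hC s hs))
    have h3 : ‖gρ s‖ = γ s * Psi (ρ s) := by
      rw [hgρdef]
      simp only [Real.norm_eq_abs, abs_mul, abs_of_nonneg (hγpos s hs), abs_of_nonneg h1]
    rw [h3, mul_comm]
    exact mul_le_mul_of_nonneg_right h2 (hγpos s hs)
  have hgρint : IntegrableOn gρ (Set.Icc 0 T) :=
    Integrable.mono' (hγint.const_mul K) hgρm
      ((ae_restrict_iff' measurableSet_Icc).2 (Filter.Eventually.of_forall hgρbd))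
  set m : ℝ → ℝ := fun u => ∫ s in Set.Icc 0 u, gρ s with hmdef
  have hρm : ∀ s ∈ Set.Icc 0 T, ρ s ≤ m s := by
    intro s hs
    have := hineq s hs
    rwa [h0, zero_add] at this
  set Γ : ℝ → ℝ := fun u => ∫ s in Set.Icc 0 u, γ s with hΓdef
  have hΓcont : ContinuousOn Γ (Set.Icc 0 T) := intervalIntegral.continuousOn_primitive_Icc hγint
  have hΓnn : ∀ u : ℝ, 0 ≤ u → u ≤ T → 0 ≤ Γ u := by
    intro u hu huT
    have h1 : Γ 0 ≤ Γ u := primitive_mono γ hγint hγpos le_rfl hu huT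
    have h2 : Γ 0 = 0 := primitive_zero γ
    linarith
  have hΓleT : ∀ u : ℝ, 0 ≤ u → u ≤ T → Γ u ≤ Γ T := fun u hu huT =>
    primitive_mono γ hγint hγpos hu huT le_rfl
  have hmcont : ContinuousOn m (Set.Icc 0 T) := intervalIntegral.continuousOn_primitive_Icc hgρint
  have hm0 : m 0 = 0 := primitive_zero gρ
  -- main comparison claim
  have claim : ∀ a : ℝ, Real.exp (Γ T) ≤ a →
      ∀ t' ∈ Set.Icc 0 T, m t' < Real.exp (1 - a * Real.exp (-Γ t')) := by
    intro a ha
    have ha0 : 0 < a := lt_of_lt_of_le (Real.exp_pos _) ha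
    set F : ℝ → ℝ := fun u => Real.exp (1 - a * Real.exp (-u)) with hFdef
    set G : ℝ → ℝ := fun u => a * Real.exp (-u) * F u with hGdef
    have hFcont : Continuous F :=
      Real.continuous_exp.comp
        (continuous_const.sub (continuous_const.mul (Real.continuous_exp.comp continuous_neg)))
    have hGcont : Continuous G :=
      (continuous_const.mul (Real.continuous_exp.comp continuous_neg)).mul hFcont
    have hFd : ∀ u : ℝ, HasDerivAt F (G u) u := by
      intro u
      have h1 : HasDerivAt (fun u : ℝ => -u) (-1) u := (hasDerivAt_id u).neg
      have h2 : HasDerivAt (fun u : ℝ => Real.exp (-u)) (Real.exp (-u) * (-1)) u :=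
        (Real.hasDerivAt_exp (-u)).comp u h1
      have h3 : HasDerivAt (fun u : ℝ => 1 - a * Real.exp (-u)) (a * Real.exp (-u)) u := by
        have h4 := (h2.const_mul a).const_sub 1
        exact h4.congr_deriv (by ring)
      have h5 := (Real.hasDerivAt_exp (1 - a * Real.exp (-u))).comp u h3
      refine h5.congr_deriv ?_
      show _ = a * Real.exp (-u) * Real.exp (1 - a * Real.exp (-u))
      ring
    have hkey1 : ∀ v : ℝ, 0 ≤ v → v ≤ Γ T → 1 ≤ a * Real.exp (-v) := by
      intro v hv hvT
      have h1 : Real.exp (Γ T) * Real.exp (-v) ≤ a * Real.exp (-v) :=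
        mul_le_mul_of_nonneg_right ha (Real.exp_pos _).le
      have h2 : Real.exp (Γ T) * Real.exp (-v) = Real.exp (Γ T - v) := by
        rw [← Real.exp_add]
        ring_nf
      have h3 : (1:ℝ) ≤ Real.exp (Γ T - v) := by
        rw [← Real.exp_zero]; exact Real.exp_le_exp.2 (by linarith)
      rw [h2] at h1
      linarith
    have hGm : MonotoneOn G (Set.Icc 0 (Γ T)) := by
      intro u1 hu1 u2 hu2 h12
      set v1 := a * Real.exp (-u1) with hv1def
      set v2 := a * Real.exp (-u2) with hv2def
      have hv2 : 1 ≤ v2 := hkey1 u2 hu2.1 hu2.2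
      have hv12 : v2 ≤ v1 :=
        mul_le_mul_of_nonneg_left (Real.exp_le_exp.2 (by linarith)) ha0.le
      have hg1 : G u1 = v1 * Real.exp (1 - v1) := rfl
      have hg2 : G u2 = v2 * Real.exp (1 - v2) := rfl
      rw [hg1, hg2]
      have hkey2 : v1 ≤ v2 * Real.exp (v1 - v2) := by
        have h6 := Real.add_one_le_exp (v1 - v2)
        nlinarith
      calc v1 * Real.exp (1 - v1) ≤ (v2 * Real.exp (v1 - v2)) * Real.exp (1 - v1) :=
            mul_le_mul_of_nonneg_right hkey2 (Real.exp_pos _).le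
        _ = v2 * Real.exp (1 - v2) := by
            rw [mul_assoc, ← Real.exp_add]
            have h7 : v1 - v2 + (1 - v1) = 1 - v2 := by ring
            rw [h7]
    set y : ℝ → ℝ := fun s => F (Γ s) with hydef
    have hycont : ContinuousOn y (Set.Icc 0 T) := hFcont.comp_continuousOn hΓcont
    have hy1 : ∀ s : ℝ, 0 ≤ s → s ≤ T → y s ≤ 1 := by
      intro s h1 h2
      have h3 := hkey1 (Γ s) (hΓnn s h1 h2) (hΓleT s h1 h2)
      show Real.exp (1 - a * Real.exp (-Γ s)) ≤ 1
      calc Real.exp (1 - a * Real.exp (-Γ s)) ≤ Real.exp 0 :=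
            Real.exp_le_exp.2 (by linarith)
        _ = 1 := Real.exp_zero
    have hypos : ∀ s : ℝ, 0 < y s := fun s => Real.exp_pos _
    have hPsiy : ∀ s : ℝ, 0 ≤ s → s ≤ T → Psi (y s) = G (Γ s) := by
      intro s h1 h2
      have hle := hy1 s h1 h2
      have h3 : Psi (y s) = y s * (1 - Real.log (y s)) := if_pos hle
      rw [h3]
      show Real.exp (1 - a * Real.exp (-Γ s)) *
        (1 - Real.log (Real.exp (1 - a * Real.exp (-Γ s)))) = _
      rw [Real.log_exp]
      show _ = a * Real.exp (-Γ s) * Real.exp (1 - a * Real.exp (-Γ s))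
      ring
    -- integrability of γ · Psi ∘ y
    have hyPsicont : ContinuousOn (fun s => Psi (y s)) (Set.Icc 0 T) :=
      psi_cont.comp_continuousOn hycont
    have hyint : IntegrableOn (fun s => γ s * Psi (y s)) (Set.Icc 0 T) := by
      refine Integrable.mono' (hγint.const_mul 1)
        (hγint.1.mul (hyPsicont.aestronglyMeasurable measurableSet_Icc))
        ((ae_restrict_iff' measurableSet_Icc).2 (Filter.Eventually.of_forall fun s hs => ?_))
      show ‖γ s * Psi (y s)‖ ≤ 1 * γ s
      have h1 : 0 ≤ Psi (y s) := psi_nonneg (hypos s).le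
      have h2 : Psi (y s) ≤ 1 := by
        have h4 : Psi (y s) ≤ Psi 1 := psi_mono (hypos s).le (hy1 s hs.1 hs.2)
        have h5 : Psi 1 = 1 := by simp [Psi]
        linarith
      have h3 : ‖γ s * Psi (y s)‖ = γ s * Psi (y s) := by
        simp only [Real.norm_eq_abs, abs_mul, abs_of_nonneg (hγpos s hs), abs_of_nonneg h1]
      rw [h3]
      nlinarith [hγpos s hs]
    -- contact argument
    by_contra hcon
    push_neg at hcon
    obtain ⟨t₀, ht₀, hyt₀⟩ := hcon
    set A : Set ℝ := {s ∈ Set.Icc 0 T | y s ≤ m s} with hAdef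
    have hAclosed : IsClosed A := by
      have h1 : ContinuousOn (fun s => m s - y s) (Set.Icc 0 T) := hmcont.sub hycont
      have h2 : A = Set.Icc 0 T ∩ (fun s => m s - y s) ⁻¹' (Set.Ici 0) := by
        ext s
        simp only [hAdef, Set.mem_sep_iff, Set.mem_inter_iff, Set.mem_preimage,
          Set.mem_Ici, sub_nonneg]
      rw [h2]
      exact h1.preimage_isClosed_of_isClosed isClosed_Icc isClosed_Ici
    have hAne : A.Nonempty := ⟨t₀, ht₀, hyt₀⟩
    have hAbdd : BddBelow A := ⟨0, fun x hx => hx.1.1⟩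
    set t₁ := sInf A with ht₁def
    have ht₁A : t₁ ∈ A := hAclosed.csInf_mem hAne hAbdd
    have ht₁Icc : t₁ ∈ Set.Icc 0 T := ht₁A.1
    have hyt₁ : y t₁ ≤ m t₁ := ht₁A.2
    have ht₁pos : 0 < t₁ := by
      rcases lt_or_eq_of_le ht₁Icc.1 with h | h
      · exact h
      · exfalso
        rw [← h] at hyt₁
        have h2 := hypos 0
        rw [hm0] at hyt₁
        linarith
    have hbelow : ∀ s : ℝ, 0 ≤ s → s < t₁ → m s < y s := by
      intro s h1 h2
      by_contra h3
      push_neg at h3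
      have hsA : s ∈ A := ⟨⟨h1, h2.le.trans ht₁Icc.2⟩, h3⟩
      have h4 := csInf_le hAbdd hsA
      rw [← ht₁def] at h4
      linarith
    have hchain : m t₁ ≤ F (Γ t₁) - F 0 := by
      have e1 : m t₁ = ∫ s in Set.Ico 0 t₁, gρ s := by
        rw [hmdef]
        exact integral_Icc_eq_integral_Ico
      have e2 : (∫ s in Set.Ico 0 t₁, gρ s) ≤ ∫ s in Set.Ico 0 t₁, γ s * Psi (y s) := by
        apply setIntegral_mono_on
          (hgρint.mono_set (fun x hx => ⟨hx.1, hx.2.le.trans ht₁Icc.2⟩))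
          (hyint.mono_set (fun x hx => ⟨hx.1, hx.2.le.trans ht₁Icc.2⟩))
          measurableSet_Ico
        intro s hs
        have hsIcc : s ∈ Set.Icc 0 T := ⟨hs.1, hs.2.le.trans ht₁Icc.2⟩
        have h1 : ρ s ≤ y s := (hρm s hsIcc).trans (hbelow s hs.1 hs.2).le
        have h2 : Psi (ρ s) ≤ Psi (y s) := psi_mono (hρpos s hsIcc) h1
        exact mul_le_mul_of_nonneg_left h2 (hγpos s hsIcc)
      have e3 : (∫ s in Set.Ico 0 t₁, γ s * Psi (y s)) =
          ∫ s in Set.Icc 0 t₁, γ s * Psi (y s) := integral_Icc_eq_integral_Ico.symm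
      have e4 : (∫ s in Set.Icc 0 t₁, γ s * Psi (y s)) =
          ∫ s in Set.Icc 0 t₁, γ s * G (Γ s) := by
        apply setIntegral_congr_fun measurableSet_Icc
        intro s hs
        show γ s * Psi (y s) = γ s * G (Γ s)
        rw [hPsiy s hs.1 (hs.2.trans ht₁Icc.2)]
      have e5 : (∫ s in Set.Icc 0 t₁, γ s * G (Γ s)) ≤ F (Γ t₁) - F 0 :=
        key_ineq_s19 T γ hγpos hγint F G hGcont hFd hGm ht₁Icc
      rw [e1]
      calc (∫ s in Set.Ico 0 t₁, gρ s) ≤ ∫ s in Set.Ico 0 t₁, γ s * Psi (y s) := e2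
        _ = ∫ s in Set.Icc 0 t₁, γ s * G (Γ s) := by rw [e3, e4]
        _ ≤ F (Γ t₁) - F 0 := e5
    have hF0 : 0 < F 0 := Real.exp_pos _
    have hyF : y t₁ = F (Γ t₁) := rfl
    rw [hyF] at hyt₁
    linarith
  -- conclude
  intro t ht
  have hρmt := hρm t ht
  have hρt := hρpos t ht
  have hmt : m t ≤ 0 := by
    by_contra hpos
    push_neg at hpos
    set a := max (Real.exp (Γ T)) ((1 - Real.log (m t)) * Real.exp (Γ T)) with hadef
    have ha1 : Real.exp (Γ T) ≤ a := le_max_left _ _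
    have hclaim := claim a ha1 t ht
    have hΓtT : Γ t ≤ Γ T := hΓleT t ht.1 ht.2
    have hΓt0 : 0 ≤ Γ t := hΓnn t ht.1 ht.2
    have h1 : 1 - Real.log (m t) ≤ a * Real.exp (-Γ t) := by
      rcases le_or_gt (1 - Real.log (m t)) 0 with h | h
      · have h2 : 0 < a * Real.exp (-Γ t) :=
          mul_pos (lt_of_lt_of_le (Real.exp_pos _) ha1) (Real.exp_pos _)
        linarith
      · have h2 : (1 - Real.log (m t)) * Real.exp (Γ T) ≤ a := le_max_right _ _
        have h3 : (1 - Real.log (m t)) * Real.exp (Γ T) * Real.exp (-Γ t) ≤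
            a * Real.exp (-Γ t) :=
          mul_le_mul_of_nonneg_right h2 (Real.exp_pos _).le
        have h4 : Real.exp (Γ T) * Real.exp (-Γ t) = Real.exp (Γ T - Γ t) := by
          rw [← Real.exp_add]
          ring_nf
        have h5 : (1:ℝ) ≤ Real.exp (Γ T - Γ t) := by
          rw [← Real.exp_zero]; exact Real.exp_le_exp.2 (by linarith)
        nlinarith
    have h6 : Real.exp (1 - a * Real.exp (-Γ t)) ≤ Real.exp (Real.log (m t)) :=
      Real.exp_le_exp.2 (by linarith)
    rw [Real.exp_log hpos] at h6
    linarith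
  linarith
end
end
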